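/- arXiv:1703.07304 — 4 statements merged into one kernel-verified Lean document; each statement's English description precedes it below -/
import Mathlib

section
/- Let C be a coassociative coalgebra over k with coproduct Δ and let (A, ≺, ≻, •) be a noncommutative quasi-shuffle algebra. Then the space of linear maps Hom(C, A) is a noncommutative quasi-shuffle algebra under the convolution-type products (f ≺ g)(c) := f(c⁽¹⁾) ≺ g(c⁽²⁾), (f ≻ g)(c) := f(c⁽¹⁾) ≻ g(c⁽²⁾), (f • g)(c) := f(c⁽¹⁾) • g(c⁽²⁾) (Sweedler notation Δ(c) = c⁽¹⁾ ⊗ c⁽²⁾). -/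
open scoped TensorProduct
open TensorProduct

noncomputable section

namespace QShPaper

variable (k : Type*) [Field k]

/-! ### Convolution algebra of linear maps from a coalgebra to an algebra -/

section Conv

variable {Q : Type*} [AddCommGroup Q] [Module k Q]
variable (A : Type*) [Ring A] [Algebra k A]

/-- The convolution product `f * g := m_A ∘ (f ⊗ g) ∘ Δ` associated to a
comultiplication `com` on `Q`. -/
def conv (com : Q →ₗ[k] Q ⊗[k] Q) (f g : Q →ₗ[k] A) : Q →ₗ[k] A :=
  LinearMap.mul' k A ∘ₗ TensorProduct.map f g ∘ₗ com

/-- The unit `u_A ∘ η` of the convolution product. -/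
def convUnit (cou : Q →ₗ[k] k) : Q →ₗ[k] A := Algebra.linearMap k A ∘ₗ cou

/-- Convolution powers `f^{*n}`, with `f^{*0}` the convolution unit. -/
def convPow (com : Q →ₗ[k] Q ⊗[k] Q) (cou : Q →ₗ[k] k) (f : Q →ₗ[k] A) : ℕ → (Q →ₗ[k] A)
  | 0 => convUnit k A cou
  | n + 1 => conv k A com f (convPow com cou f n)

end Conv

/-! ### Iterated (reduced) coproducts, conilpotency -/

section Red

variable {Q : Type*} [AddCommGroup Q] [Module k Q]

/-- `Q ≃ Q^{⊗1}`. -/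
def toPow1 : Q ≃ₗ[k] ⨂[k]^1 Q := (PiTensorProduct.subsingletonEquiv (s := fun _ : Fin 1 => Q) (0 : Fin 1)).symm

variable (one : Q) (com : Q →ₗ[k] Q ⊗[k] Q)

/-- The reduced coproduct `Δ'(h) := Δ(h) − 1 ⊗ h − h ⊗ 1`. -/
def redComul : Q →ₗ[k] Q ⊗[k] Q :=
  com - TensorProduct.mk k Q Q one - (TensorProduct.mk k Q Q).flip one

/-- Iterated reduced coproducts: `redIter n = Δ'^{[n+1]} : Q → Q^{⊗(n+1)}`,
with `Δ'^{[1]} = Id` and `Δ'^{[n+1]} = (Id ⊗ Δ'^{[n]}) ∘ Δ'`. -/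
def redIter : (n : ℕ) → Q →ₗ[k] ⨂[k]^(n+1) Q
  | 0 => (toPow1 k).toLinearMap
  | n + 1 =>
      (TensorPower.cast k Q (show 1 + (n+1) = n+1+1 by omega)).toLinearMap ∘ₗ
        (TensorPower.mulEquiv (R := k) (M := Q) (n := 1) (m := n+1)).toLinearMap ∘ₗ
          TensorProduct.map (toPow1 k).toLinearMap (redIter n) ∘ₗ redComul k one com

/-- Iterated coproducts: `fullIter n = Δ^{[n+1]} : Q → Q^{⊗(n+1)}`,
with `Δ^{[1]} = Id` and `Δ^{[n+1]} = (Id ⊗ Δ^{[n]}) ∘ Δ`. -/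
def fullIter : (n : ℕ) → Q →ₗ[k] ⨂[k]^(n+1) Q
  | 0 => (toPow1 k).toLinearMap
  | n + 1 =>
      (TensorPower.cast k Q (show 1 + (n+1) = n+1+1 by omega)).toLinearMap ∘ₗ
        (TensorPower.mulEquiv (R := k) (M := Q) (n := 1) (m := n+1)).toLinearMap ∘ₗ
          TensorProduct.map (toPow1 k).toLinearMap (fullIter n) ∘ₗ com

/-- A (coaugmented) coalgebra is (locally) conilpotent if every element of the kernel of
the counit. is annihilated by some iterated reduced coproduct. -/
def IsConilpotent (cou : Q →ₗ[k] k) : Prop :=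
  ∀ x ∈ LinearMap.ker cou, ∃ n, redIter k one com n x = 0

end Red

/-- `m_A^{[n]} ∘ f^{⊗n} : H^{⊗n} → A`. -/
def prodPow {H : Type*} [AddCommGroup H] [Module k H] (A : Type*) [Ring A] [Algebra k A]
    (f : H →ₗ[k] A) (n : ℕ) : (⨂[k]^n H) →ₗ[k] A :=
  PiTensorProduct.lift ((MultilinearMap.mkPiAlgebraFin k n A).compLinearMap fun _ => f)


/-- A model of the quasi-shuffle Hopf algebra `QSh(A) = ⊕_{n≥0} A^{⊗n}` over a
(possibly non-unital) associative algebra `A`: `emp` is the empty word, `cons` is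
prepending of a letter, `mul` is the quasi-shuffle product `⧢`, `comul` the
deconcatenation coproduct and `counit` the counit. -/
structure QShModel (A Q : Type*) [NonUnitalRing A] [Module k A]
    [SMulCommClass k A A] [IsScalarTower k A A] [AddCommGroup Q] [Module k Q] where
  emp : Q
  cons : A →ₗ[k] Q →ₗ[k] Q
  mul : Q →ₗ[k] Q →ₗ[k] Q
  comul : Q →ₗ[k] Q ⊗[k] Q
  counit : Q →ₗ[k] k
  /-- words span `QSh(A)` -/
  span_words : Submodule.span k
    (Set.range fun w : List A => w.foldr (fun a u => cons a u) emp) = ⊤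
  /-- `QSh(A) ≅ k ⊕ (A ⊗ QSh(A))` via `(c, a ⊗ u) ↦ c • 1 + a·u` -/
  theta_bij : Function.Bijective
    ((LinearMap.toSpanSingleton k Q emp).coprod (TensorProduct.lift cons))
  mul_emp_left : ∀ u, mul emp u = u
  mul_emp_right : ∀ u, mul u emp = u
  /-- the quasi-shuffle recursion `av ⧢ bw = a(v ⧢ bw) + b(av ⧢ w) + (a·_A b)(v ⧢ w)` -/
  mul_cons : ∀ (a b : A) (v w : Q),
    mul (cons a v) (cons b w) =
      cons a (mul v (cons b w)) + cons b (mul (cons a v) w) + cons (a * b) (mul v w)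
  comul_emp : comul emp = emp ⊗ₜ[k] emp
  /-- the deconcatenation recursion -/
  comul_cons : ∀ (a : A) (u : Q),
    comul (cons a u) = emp ⊗ₜ[k] (cons a u) + (TensorProduct.map (cons a) LinearMap.id) (comul u)
  counit_emp : counit emp = 1
  counit_cons : ∀ (a : A) (u : Q), counit (cons a u) = 0

namespace QShModel

variable {k}
variable {A Q : Type*} [NonUnitalRing A] [Module k A]
    [SMulCommClass k A A] [IsScalarTower k A A] [AddCommGroup Q] [Module k Q]

/-- The word `a_1…a_n ∈ QSh(A)`. -/
def ofWord (M : QShModel k A Q) (w : List A) : Q := w.foldr (fun a u => M.cons a u) M.emp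

/-- The collapse `H^{⊗(n+1)} → QSh(A)`, `x_1 ⊗ … ⊗ x_{n+1} ↦ c(x_1)…c(x_{n+1})`
(a word of length `n+1`) induced by a linear map `c : H → A`. -/
def wordMap (M : QShModel k A Q) {H : Type*} [AddCommGroup H] [Module k H]
    (c : H →ₗ[k] A) : (n : ℕ) → (⨂[k]^(n+1) H) →ₗ[k] Q
  | 0 => ((M.cons ∘ₗ c).flip M.emp) ∘ₗ (toPow1 k).symm.toLinearMap
  | n + 1 =>
      TensorProduct.lift (M.cons ∘ₗ c) ∘ₗ
        TensorProduct.map (toPow1 k).symm.toLinearMap (M.wordMap c n) ∘ₗ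
          (TensorPower.mulEquiv (R := k) (M := H) (n := 1) (m := n+1)).symm.toLinearMap ∘ₗ
            (TensorPower.cast k H (show n+1+1 = 1+(n+1) by omega)).toLinearMap

/-- `Ψ = QSh(c) ∘ ι : H → QSh(A)`, i.e. `Ψ(1) = 1` and, for `h` in the kernel of the
counit, `Ψ(h) = Σ_{n≥1} c^{⊗n}(Δ'^{[n]}(h))` (a finite sum, each term being viewed
as a word of length `n`). -/
def IotaComp (M : QShModel k A Q) {H : Type*} [AddCommGroup H] [Module k H]
    (oneH : H) (com : H →ₗ[k] H ⊗[k] H) (cou : H →ₗ[k] k)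
    (c : H →ₗ[k] A) (Ψ : H →ₗ[k] Q) : Prop :=
  Ψ oneH = M.emp ∧
    ∀ h ∈ LinearMap.ker cou, ∃ N, ∀ n ≥ N,
      Ψ h = ∑ i ∈ Finset.range (n+1), M.wordMap c i (redIter k oneH com i h)

end QShModel
end QShPaper

namespace QShPaper

/-- The convolution-type product `(f ⊛ g)(c) := m(f(c⁽¹⁾), g(c⁽²⁾))` on linear maps from a
coalgebra `(C, com)` to a module `V` equipped with a bilinear product `m`. -/
def convWith (k : Type*) [Field k] {C V : Type*} [AddCommGroup C] [Module k C]
    [AddCommGroup V] [Module k V] (com : C →ₗ[k] C ⊗[k] C)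
    (m : V →ₗ[k] V →ₗ[k] V) (f g : C →ₗ[k] V) : C →ₗ[k] V :=
  TensorProduct.lift m ∘ₗ TensorProduct.map f g ∘ₗ com

end QShPaper


namespace QShPaper
section Aux
variable (k : Type*) [Field k] {C : Type*} [AddCommGroup C] [Module k C] [Coalgebra k C]
  {A : Type*} [AddCommGroup A] [Module k A]

lemma convWith_key (m1 m2 n1 n2 : A →ₗ[k] A →ₗ[k] A)
    (hyp : ∀ x y z : A, m1 (m2 x y) z = n1 x (n2 y z)) (f g h : C →ₗ[k] A) :
    convWith k Coalgebra.comul m1 (convWith k Coalgebra.comul m2 f g) h =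
      convWith k Coalgebra.comul n1 f (convWith k Coalgebra.comul n2 g h) := by
  set FF := TensorProduct.lift m1 ∘ₗ TensorProduct.map (TensorProduct.lift m2 ∘ₗ TensorProduct.map f g) h with hF
  set GG := TensorProduct.lift n1 ∘ₗ TensorProduct.map f (TensorProduct.lift n2 ∘ₗ TensorProduct.map g h) with hG
  have hFG : GG ∘ₗ (TensorProduct.assoc k C C C).toLinearMap = FF := by
    ext x y z
    simp [hF, hG, hyp]
  have lhs : convWith k Coalgebra.comul m1 (convWith k Coalgebra.comul m2 f g) h =
      FF ∘ₗ (Coalgebra.comul (R := k) (A := C)).rTensor C ∘ₗ Coalgebra.comul := by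
    ext c
    simp only [convWith, hF, LinearMap.comp_apply, LinearMap.rTensor]
    rw [show TensorProduct.map (TensorProduct.lift m2 ∘ₗ TensorProduct.map f g ∘ₗ Coalgebra.comul) h
        = TensorProduct.map (TensorProduct.lift m2 ∘ₗ TensorProduct.map f g) h ∘ₗ
            TensorProduct.map Coalgebra.comul LinearMap.id from by
      rw [← TensorProduct.map_comp, LinearMap.comp_id, LinearMap.comp_assoc]]
    simp
  have rhs : convWith k Coalgebra.comul n1 f (convWith k Coalgebra.comul n2 g h) =
      GG ∘ₗ (Coalgebra.comul (R := k) (A := C)).lTensor C ∘ₗ Coalgebra.comul := by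
    ext c
    simp only [convWith, hG, LinearMap.comp_apply, LinearMap.lTensor]
    rw [show TensorProduct.map f (TensorProduct.lift n2 ∘ₗ TensorProduct.map g h ∘ₗ Coalgebra.comul)
        = TensorProduct.map f (TensorProduct.lift n2 ∘ₗ TensorProduct.map g h) ∘ₗ
            TensorProduct.map LinearMap.id Coalgebra.comul from by
      rw [← TensorProduct.map_comp, LinearMap.comp_id, LinearMap.comp_assoc]]
    simp
  rw [lhs, rhs, ← Coalgebra.coassoc, ← hFG]
  ext c
  simp

lemma convWith_add_m (m m' : A →ₗ[k] A →ₗ[k] A) (f g : C →ₗ[k] A) :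
    convWith k Coalgebra.comul (m + m') f g =
      convWith k Coalgebra.comul m f g + convWith k Coalgebra.comul m' f g := by
  ext c
  have : TensorProduct.lift (m + m') = TensorProduct.lift m + TensorProduct.lift m' := by
    ext x y; simp
  simp [convWith, this]

end Aux
end QShPaper

open QShPaper in
/-- If `C` is a coassociative coalgebra and `(A, ≺, ≻, •)` a noncommutative
quasi-shuffle algebra, then `Hom(C, A)` is a noncommutative quasi-shuffle algebra for the
convolution-type products `(f ≺ g)(c) := f(c⁽¹⁾) ≺ g(c⁽²⁾)`, etc. -/
theorem stmt6_hom_coalgebra_to_nqsh_is_nqsh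
    (k : Type*) [Field k] [CharZero k]
    (C : Type*) [AddCommGroup C] [Module k C] [Coalgebra k C]
    (A : Type*) [AddCommGroup A] [Module k A]
    (pl pr pb : A →ₗ[k] A →ₗ[k] A)
    -- `(A, •)` is a (nonunital) associative algebra
    (hassoc : ∀ x y z : A, pb (pb x y) z = pb x (pb y z))
    -- the six NQSh axioms, with `x ⋆ y = x≺y + x≻y + x•y`
    (h1 : ∀ x y z : A, pl (pl x y) z = pl x (pl y z + pr y z + pb y z))
    (h2 : ∀ x y z : A, pl (pr x y) z = pr x (pl y z))
    (h3 : ∀ x y z : A, pr (pl x y + pr x y + pb x y) z = pr x (pr y z))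
    (h4 : ∀ x y z : A, pb (pl x y) z = pb x (pr y z))
    (h5 : ∀ x y z : A, pb (pr x y) z = pr x (pb y z))
    (h6 : ∀ x y z : A, pl (pb x y) z = pb x (pl y z)) :
    -- `Hom(C,A)` with the lifted products is a NQSh algebra:
    (∀ f g h : C →ₗ[k] A,
      convWith k Coalgebra.comul pb (convWith k Coalgebra.comul pb f g) h =
        convWith k Coalgebra.comul pb f (convWith k Coalgebra.comul pb g h)) ∧
    (∀ f g h : C →ₗ[k] A,
      convWith k Coalgebra.comul pl (convWith k Coalgebra.comul pl f g) h =
        convWith k Coalgebra.comul pl f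
          (convWith k Coalgebra.comul pl g h + convWith k Coalgebra.comul pr g h +
            convWith k Coalgebra.comul pb g h)) ∧
    (∀ f g h : C →ₗ[k] A,
      convWith k Coalgebra.comul pl (convWith k Coalgebra.comul pr f g) h =
        convWith k Coalgebra.comul pr f (convWith k Coalgebra.comul pl g h)) ∧
    (∀ f g h : C →ₗ[k] A,
      convWith k Coalgebra.comul pr
          (convWith k Coalgebra.comul pl f g + convWith k Coalgebra.comul pr f g +
            convWith k Coalgebra.comul pb f g) h =
        convWith k Coalgebra.comul pr f (convWith k Coalgebra.comul pr g h)) ∧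
    (∀ f g h : C →ₗ[k] A,
      convWith k Coalgebra.comul pb (convWith k Coalgebra.comul pl f g) h =
        convWith k Coalgebra.comul pb f (convWith k Coalgebra.comul pr g h)) ∧
    (∀ f g h : C →ₗ[k] A,
      convWith k Coalgebra.comul pb (convWith k Coalgebra.comul pr f g) h =
        convWith k Coalgebra.comul pr f (convWith k Coalgebra.comul pb g h)) ∧
    (∀ f g h : C →ₗ[k] A,
      convWith k Coalgebra.comul pl (convWith k Coalgebra.comul pb f g) h =
        convWith k Coalgebra.comul pb f (convWith k Coalgebra.comul pl g h)) := by
  refine ⟨fun f g h => convWith_key k pb pb pb pb hassoc f g h, ?_,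
    fun f g h => convWith_key k pl pr pr pl h2 f g h, ?_,
    fun f g h => convWith_key k pb pl pb pr h4 f g h,
    fun f g h => convWith_key k pb pr pr pb h5 f g h,
    fun f g h => convWith_key k pl pb pb pl h6 f g h⟩
  · intro f g h
    rw [show convWith k Coalgebra.comul pl g h + convWith k Coalgebra.comul pr g h +
        convWith k Coalgebra.comul pb g h = convWith k Coalgebra.comul (pl + pr + pb) g h from by
      rw [convWith_add_m, convWith_add_m]]
    exact convWith_key k pl pl pl (pl + pr + pb)
      (fun x y z => by simpa using h1 x y z) f g h
  · intro f g h
    rw [show convWith k Coalgebra.comul pl f g + convWith k Coalgebra.comul pr f g +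
        convWith k Coalgebra.comul pb f g = convWith k Coalgebra.comul (pl + pr + pb) f g from by
      rw [convWith_add_m, convWith_add_m]]
    exact convWith_key k pr (pl + pr + pb) pr pr
      (fun x y z => by simpa using h3 x y z) f g h
end
end

section
/- (Quasi-shuffle PBW theorem.) Let A be a (nonunital) commutative k-algebra and B a quasi-shuffle algebra. Then restriction to A = QSh(A)_1 induces a natural bijection between quasi-shuffle algebra morphisms QSh⁺(A) → B and (nonunital) algebra morphisms A → B; equivalently, every algebra morphism φ : (A, ·_A) → (B, •) extends uniquely to a quasi-shuffle algebra morphism QSh⁺(A) → B, which sends the word a_1…a_n to φ(a_1) ≺ (φ(a_2) ≺ (… (φ(a_{n−1}) ≺ φ(a_n)))). In categorical terms, Hoffman's functor A ↦ QSh⁺(A) is left adjoint to the forgetful functor from quasi-shuffle algebras to nonunital commutative algebras. -/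
open scoped TensorProduct
open TensorProduct

noncomputable section

namespace QShPaper

/-- A model of `QSh(A)` together with the half-shuffle products `≺` and `•` of
Hoffman's quasi-shuffle algebra: `av ≺ bw = a(v ⋆ bw)`, `av • bw = (a·_A b)(v ⋆ w)`,
`1 ≺ u = 0 = 1 • u = u • 1`, and `⋆ = ⧢` is the full quasi-shuffle product. -/
structure QShFullModel (k : Type*) [Field k] (A Q : Type*) [NonUnitalRing A] [Module k A]
    [SMulCommClass k A A] [IsScalarTower k A A] [AddCommGroup Q] [Module k Q]
    extends QShModel k A Q where
  prec : Q →ₗ[k] Q →ₗ[k] Q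
  bul : Q →ₗ[k] Q →ₗ[k] Q
  prec_emp_left : ∀ u : Q, prec emp u = 0
  prec_cons : ∀ (a : A) (v u : Q), prec (cons a v) u = cons a (mul v u)
  bul_emp_left : ∀ u : Q, bul emp u = 0
  bul_emp_right : ∀ u : Q, bul u emp = 0
  bul_cons : ∀ (a b : A) (v w : Q),
    bul (cons a v) (cons b w) = cons (a * b) (mul v w)
  mul_eq_on_pos : ∀ u ∈ LinearMap.ker counit, ∀ v ∈ LinearMap.ker counit,
    mul u v = prec u v + prec v u + bul u v

end QShPaper

namespace QShPaper
section PBWAux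

variable {k : Type*} [Field k]
variable {A : Type*} [NonUnitalRing A] [Module k A] [SMulCommClass k A A] [IsScalarTower k A A]
variable {Q : Type*} [AddCommGroup Q] [Module k Q]
variable {B : Type*} [AddCommGroup B] [Module k B]

namespace QShModel

variable (M : QShModel k A Q)

lemma ofWord_nil : M.ofWord [] = M.emp := rfl

lemma ofWord_cons (a : A) (l : List A) : M.ofWord (a :: l) = M.cons a (M.ofWord l) := rfl

lemma span_words' : Submodule.span k (Set.range M.ofWord) = ⊤ := M.span_words

lemma counit_ofWord_cons (a : A) (l : List A) : M.counit (M.ofWord (a :: l)) = 0 := by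
  rw [ofWord_cons]; exact M.counit_cons _ _

/-- The filtration by words of length at most `n`. -/
def wordsLe (n : ℕ) : Submodule k Q :=
  Submodule.span k (M.ofWord '' {l | l.length ≤ n})

lemma ofWord_mem_wordsLe {n : ℕ} {l : List A} (h : l.length ≤ n) :
    M.ofWord l ∈ M.wordsLe n :=
  Submodule.subset_span ⟨l, h, rfl⟩

lemma wordsLe_mono {n m : ℕ} (h : n ≤ m) : M.wordsLe n ≤ M.wordsLe m :=
  Submodule.span_mono (Set.image_mono fun _ hl => le_trans hl h)

lemma exists_mem_wordsLe (x : Q) : ∃ n, x ∈ M.wordsLe n := by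
  let T : Submodule k Q :=
    { carrier := {x | ∃ n, x ∈ M.wordsLe n}
      add_mem' := by
        rintro a b ⟨n, hn⟩ ⟨m, hm⟩
        exact ⟨max n m, Submodule.add_mem _ (M.wordsLe_mono (le_max_left n m) hn)
          (M.wordsLe_mono (le_max_right n m) hm)⟩
      zero_mem' := ⟨0, Submodule.zero_mem _⟩
      smul_mem' := by rintro c a ⟨n, hn⟩; exact ⟨n, Submodule.smul_mem _ _ hn⟩ }
  have : (⊤ : Submodule k Q) ≤ T := by
    rw [← M.span_words']
    rw [Submodule.span_le]
    rintro _ ⟨l, rfl⟩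
    exact ⟨l.length, M.ofWord_mem_wordsLe le_rfl⟩
  exact this (Submodule.mem_top)

lemma cons_mem_wordsLe {n : ℕ} (a : A) {u : Q} (hu : u ∈ M.wordsLe n) :
    M.cons a u ∈ M.wordsLe (n + 1) := by
  induction hu using Submodule.span_induction with
  | mem x hx =>
      obtain ⟨l, hl, rfl⟩ := hx
      exact M.ofWord_mem_wordsLe (l := a :: l) (by simpa using hl)
  | zero => simpa using Submodule.zero_mem _
  | add x y _ _ hx hy => rw [map_add]; exact Submodule.add_mem _ hx hy
  | smul c x _ hx => rw [map_smul]; exact Submodule.smul_mem _ _ hx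

/-- `θ : k × (A ⊗ Q) ≃ Q`. -/
def theta : (k × (A ⊗[k] Q)) ≃ₗ[k] Q :=
  LinearEquiv.ofBijective
    ((LinearMap.toSpanSingleton k Q M.emp).coprod (TensorProduct.lift M.cons)) M.theta_bij

lemma theta_apply (c : k) (t : A ⊗[k] Q) :
    M.theta (c, t) = c • M.emp + TensorProduct.lift M.cons t := rfl

lemma theta_symm_emp : M.theta.symm M.emp = (1, 0) := by
  rw [LinearEquiv.symm_apply_eq, theta_apply]
  simp

lemma theta_symm_cons (a : A) (u : Q) : M.theta.symm (M.cons a u) = (0, a ⊗ₜ[k] u) := by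
  rw [LinearEquiv.symm_apply_eq, theta_apply]
  simp

end QShModel

section Step

variable (M : QShModel k A Q) (precB : B →ₗ[k] B →ₗ[k] B) (φ : A →ₗ[k] B)

/-- The bilinear map `(a, u) ↦ ε(u) φ(a) + φ(a) ≺ F(u)`. -/
def psiAux (F : Q →ₗ[k] B) : A →ₗ[k] Q →ₗ[k] B :=
  LinearMap.mk₂ k (fun a u => M.counit u • φ a + precB (φ a) (F u))
    (fun a b u => by simp only [map_add, smul_add]; rw [LinearMap.add_apply]; abel)
    (fun c a u => by
      simp only [map_smul, LinearMap.smul_apply, smul_add]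
      rw [smul_comm (M.counit u) c])
    (fun a u v => by simp only [map_add, add_smul]; abel)
    (fun c a u => by
      simp only [map_smul, LinearMap.smul_apply, smul_add, smul_eq_mul, mul_smul])

lemma psiAux_apply (F : Q →ₗ[k] B) (a : A) (u : Q) :
    psiAux M precB φ F a u = M.counit u • φ a + precB (φ a) (F u) := rfl

/-- One step of the recursion defining the extension `F`. -/
def stepF (F : Q →ₗ[k] B) : Q →ₗ[k] B :=
  ((0 : k →ₗ[k] B).coprod (TensorProduct.lift (psiAux M precB φ F))) ∘ₗ
    M.theta.symm.toLinearMap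

lemma stepF_emp (F : Q →ₗ[k] B) : stepF M precB φ F M.emp = 0 := by
  simp [stepF, M.theta_symm_emp]

lemma stepF_cons (F : Q →ₗ[k] B) (a : A) (u : Q) :
    stepF M precB φ F (M.cons a u) = M.counit u • φ a + precB (φ a) (F u) := by
  simp [stepF, M.theta_symm_cons, psiAux_apply]

/-- The iterates of `stepF` starting from `0`. -/
def iterF : ℕ → (Q →ₗ[k] B)
  | 0 => 0
  | n + 1 => stepF M precB φ (iterF n)

lemma stepF_congr {F G : Q →ₗ[k] B} {n : ℕ}
    (h : ∀ x ∈ M.wordsLe n, F x = G x) :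
    ∀ x ∈ M.wordsLe (n + 1), stepF M precB φ F x = stepF M precB φ G x := by
  intro x hx
  induction hx using Submodule.span_induction with
  | mem x hx =>
      obtain ⟨l, hl, rfl⟩ := hx
      match l with
      | [] => rw [QShModel.ofWord_nil, stepF_emp, stepF_emp]
      | a :: l =>
          rw [QShModel.ofWord_cons, stepF_cons, stepF_cons,
            h _ (M.ofWord_mem_wordsLe (by simpa using hl))]
  | zero => simp
  | add x y _ _ hx hy => simp only [map_add, hx, hy]
  | smul c x _ hx => simp only [map_smul, hx]

lemma iterF_stab : ∀ n, ∀ x ∈ M.wordsLe n, iterF M precB φ (n + 1) x = iterF M precB φ n x := by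
  intro n
  induction n with
  | zero =>
      intro x hx
      induction hx using Submodule.span_induction with
      | mem x hx =>
          obtain ⟨l, hl, rfl⟩ := hx
          match l with
          | [] =>
            show stepF M precB φ _ _ = (0 : Q →ₗ[k] B) _
            rw [QShModel.ofWord_nil, stepF_emp]; simp
      | zero => simp
      | add x y _ _ hx hy => simp only [map_add, hx, hy]
      | smul c x _ hx => simp only [map_smul, hx]
  | succ n ih =>
      exact stepF_congr M precB φ ih

lemma iterF_agree : ∀ {m n : ℕ}, n ≤ m → ∀ x ∈ M.wordsLe n,
    iterF M precB φ m x = iterF M precB φ n x := by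
  intro m
  induction m with
  | zero =>
      intro n h x hx
      have : n = 0 := Nat.le_zero.mp h
      subst this; rfl
  | succ m ih =>
      intro n h x hx
      rcases Nat.lt_or_ge n (m + 1) with hlt | hge
      · have hnm : n ≤ m := by omega
        rw [iterF_stab M precB φ m x (M.wordsLe_mono hnm hx), ih hnm x hx]
      · have : n = m + 1 := by omega
        subst this; rfl

/-- Existence of a linear map satisfying the `cons` recursion. -/
lemma exists_recF : ∃ F : Q →ₗ[k] B, F M.emp = 0 ∧
    ∀ (a : A) (u : Q), F (M.cons a u) = M.counit u • φ a + precB (φ a) (F u) := by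
  choose N hN using M.exists_mem_wordsLe
  set f : Q → B := fun x => iterF M precB φ (N x) x with hf
  have hwd : ∀ (m : ℕ) (x : Q), x ∈ M.wordsLe m → f x = iterF M precB φ m x := by
    intro m x hx
    rw [hf]
    dsimp only
    rw [← iterF_agree M precB φ (le_max_left (N x) m) x (hN x),
      iterF_agree M precB φ (le_max_right (N x) m) x hx]
  have hadd : ∀ x y, f (x + y) = f x + f y := by
    intro x y
    set m := max (N x) (N y) with hm
    have hx : x ∈ M.wordsLe m := M.wordsLe_mono (le_max_left _ _) (hN x)
    have hy : y ∈ M.wordsLe m := M.wordsLe_mono (le_max_right _ _) (hN y)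
    rw [hwd m x hx, hwd m y hy, hwd m (x + y) (Submodule.add_mem _ hx hy), map_add]
  have hsmul : ∀ (c : k) (x : Q), f (c • x) = c • f x := by
    intro c x
    rw [hwd (N x) x (hN x), hwd (N x) (c • x) (Submodule.smul_mem _ _ (hN x)), map_smul]
  refine ⟨{ toFun := f, map_add' := hadd, map_smul' := hsmul }, ?_, ?_⟩
  · show f M.emp = 0
    rw [hwd 0 M.emp (M.ofWord_mem_wordsLe (l := []) le_rfl)]
    rfl
  · intro a u
    show f (M.cons a u) = M.counit u • φ a + precB (φ a) (f u)
    rw [hwd (N u) u (hN u), hwd (N u + 1) (M.cons a u) (M.cons_mem_wordsLe a (hN u)),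
      show iterF M precB φ (N u + 1) = stepF M precB φ (iterF M precB φ (N u)) from rfl,
      stepF_cons]

end Step

section Ident

variable (precB bulB : B →ₗ[k] B →ₗ[k] B)

lemma ident1 (hQS2 : ∀ x y z : B, precB (bulB x y) z = bulB x (precB y z))
    (x y z : B) : bulB x (precB y z) = precB (bulB x y) z := (hQS2 x y z).symm

lemma ident2 (hcomm : ∀ x y : B, bulB x y = bulB y x)
    (hQS2 : ∀ x y z : B, precB (bulB x y) z = bulB x (precB y z))
    (x y z : B) : bulB (precB x y) z = precB (bulB x z) y := by
  rw [hcomm, ← hQS2, hcomm z x]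

lemma ident3 (hcomm : ∀ x y : B, bulB x y = bulB y x)
    (hQS1 : ∀ x y z : B,
      precB (precB x y) z = precB x (precB y z + precB z y + bulB y z))
    (hQS2 : ∀ x y z : B, precB (bulB x y) z = bulB x (precB y z))
    (x y z w : B) :
    bulB (precB x y) (precB z w) =
      precB (bulB x z) (precB y w + precB w y + bulB y w) := by
  rw [ident2 precB bulB hcomm hQS2, ← hQS2, hQS1, hcomm w y,
    add_comm (precB w y) (precB y w)]

lemma B_prec_ident
    (hQS1 : ∀ x y z : B,
      precB (precB x y) z = precB x (precB y z + precB z y + bulB y z))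
    (α y V : B) (p : k) :
    precB (p • α + precB α y) V =
      precB α (p • V + (precB y V + precB V y + bulB y V)) := by
  simp only [map_add, map_smul, LinearMap.add_apply, LinearMap.smul_apply, hQS1]

lemma B_bul_ident (hcomm : ∀ x y : B, bulB x y = bulB y x)
    (hQS1 : ∀ x y z : B,
      precB (precB x y) z = precB x (precB y z + precB z y + bulB y z))
    (hQS2 : ∀ x y z : B, precB (bulB x y) z = bulB x (precB y z))
    (α β y w : B) (p q : k) :
    bulB (p • α + precB α y) (q • β + precB β w) =
      (p * q) • bulB α β +
        precB (bulB α β) (p • w + q • y + (precB y w + precB w y + bulB y w)) := by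
  simp only [map_add, map_smul, LinearMap.add_apply, LinearMap.smul_apply,
    ident1 precB bulB hQS2, ident2 precB bulB hcomm hQS2, hQS1, smul_smul]
  module

lemma B_mul_ident (hcomm : ∀ x y : B, bulB x y = bulB y x)
    (hQS1 : ∀ x y z : B,
      precB (precB x y) z = precB x (precB y z + precB z y + bulB y z))
    (hQS2 : ∀ x y z : B, precB (bulB x y) z = bulB x (precB y z))
    (α β y w U V : B) (p q : k)
    (hU : U = p • α + precB α y) (hV : V = q • β + precB β w) :
    precB α (p • V + (precB y V + precB V y + bulB y V))
      + (precB β (q • U + (precB U w + precB w U + bulB U w)))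
      + ((p * q) • bulB α β
        + precB (bulB α β) (p • w + q • y + (precB y w + precB w y + bulB y w)))
    = precB U V + precB V U + bulB U V := by
  have h1 : precB U V = p • precB α V + precB α (precB y V + precB V y + bulB y V) := by
    rw [hU]
    simp only [map_add, map_smul, LinearMap.add_apply, LinearMap.smul_apply, hQS1]
  have h2 : precB V U = q • precB β U + precB β (precB w U + precB U w + bulB w U) := by
    rw [hV]
    simp only [map_add, map_smul, LinearMap.add_apply, LinearMap.smul_apply, hQS1]
  have h3 : bulB U V = (p * q) • bulB α β +
      precB (bulB α β) (p • w + q • y + (precB y w + precB w y + bulB y w)) := by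
    rw [hU, hV]; exact B_bul_ident precB bulB hcomm hQS1 hQS2 α β y w p q
  rw [h1, h2, h3, hcomm U w]
  simp only [map_add, map_smul, LinearMap.add_apply, LinearMap.smul_apply]
  abel

end Ident

section Mult

variable (M : QShFullModel k A Q) (precB bulB : B →ₗ[k] B →ₗ[k] B) (φ : A →ₗ[k] B)

/-- Two bilinear maps agreeing on pairs of words are equal. -/
lemma word_ext₂ (M' : QShModel k A Q) {X : Type*} [AddCommGroup X] [Module k X]
    (P R : Q →ₗ[k] Q →ₗ[k] X)
    (h : ∀ l l' : List A, P (M'.ofWord l) (M'.ofWord l') = R (M'.ofWord l) (M'.ofWord l')) :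
    P = R := by
  apply LinearMap.ext_on M'.span_words'
  rintro _ ⟨l, rfl⟩
  apply LinearMap.ext_on M'.span_words'
  rintro _ ⟨l', rfl⟩
  exact h l l'

lemma counit_mul (M' : QShModel k A Q) (u v : Q) :
    M'.counit (M'.mul u v) = M'.counit u * M'.counit v := by
  have h : M'.mul.compr₂ M'.counit =
      (LinearMap.mul k k).compl₁₂ M'.counit M'.counit := by
    apply word_ext₂ M'
    intro l l'
    simp only [LinearMap.compr₂_apply, LinearMap.compl₁₂_apply, LinearMap.mul_apply']
    match l, l' with
    | [], l' => rw [QShModel.ofWord_nil, M'.mul_emp_left, M'.counit_emp, one_mul]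
    | a :: t, [] => rw [QShModel.ofWord_nil, M'.mul_emp_right, M'.counit_emp, mul_one]
    | a :: t, b :: t' =>
        rw [QShModel.ofWord_cons, QShModel.ofWord_cons, M'.mul_cons]
        simp [M'.counit_cons]
  calc M'.counit (M'.mul u v) = (M'.mul.compr₂ M'.counit) u v := rfl
    _ = ((LinearMap.mul k k).compl₁₂ M'.counit M'.counit) u v := by rw [h]
    _ = M'.counit u * M'.counit v := rfl

variable {M precB bulB φ}
variable {F : Q →ₗ[k] B}

/-- The quasi-shuffle product statement, cons-cons step. -/
lemma key_mul_step
    (hcomm : ∀ x y : B, bulB x y = bulB y x)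
    (hQS1 : ∀ x y z : B,
      precB (precB x y) z = precB x (precB y z + precB z y + bulB y z))
    (hQS2 : ∀ x y z : B, precB (bulB x y) z = bulB x (precB y z))
    (hφ : ∀ a b : A, φ (a * b) = bulB (φ a) (φ b))
    (hFcons : ∀ (a : A) (u : Q),
      F (M.cons a u) = M.counit u • φ a + precB (φ a) (F u))
    (a b : A) (v w : Q)
    (h1 : F (M.mul v (M.cons b w)) =
      M.counit v • F (M.cons b w) + M.counit (M.cons b w) • F v +
        (precB (F v) (F (M.cons b w)) + precB (F (M.cons b w)) (F v) +
          bulB (F v) (F (M.cons b w))))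
    (h2 : F (M.mul (M.cons a v) w) =
      M.counit (M.cons a v) • F w + M.counit w • F (M.cons a v) +
        (precB (F (M.cons a v)) (F w) + precB (F w) (F (M.cons a v)) +
          bulB (F (M.cons a v)) (F w)))
    (h3 : F (M.mul v w) =
      M.counit v • F w + M.counit w • F v +
        (precB (F v) (F w) + precB (F w) (F v) + bulB (F v) (F w))) :
    F (M.mul (M.cons a v) (M.cons b w)) =
      M.counit (M.cons a v) • F (M.cons b w) + M.counit (M.cons b w) • F (M.cons a v) +
        (precB (F (M.cons a v)) (F (M.cons b w)) +
          precB (F (M.cons b w)) (F (M.cons a v)) +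
          bulB (F (M.cons a v)) (F (M.cons b w))) := by
  rw [M.mul_cons, map_add, map_add, hFcons, hFcons, hFcons, h1, h2, h3,
    counit_mul M.toQShModel, counit_mul M.toQShModel, counit_mul M.toQShModel]
  simp only [M.counit_cons, mul_zero, zero_mul, zero_smul, add_zero, zero_add, hφ]
  exact B_mul_ident precB bulB hcomm hQS1 hQS2 (φ a) (φ b) (F v) (F w)
    (F (M.cons a v)) (F (M.cons b w)) (M.counit v) (M.counit w)
    (hFcons a v) (hFcons b w)

lemma key_mul_words
    (hcomm : ∀ x y : B, bulB x y = bulB y x)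
    (hQS1 : ∀ x y z : B,
      precB (precB x y) z = precB x (precB y z + precB z y + bulB y z))
    (hQS2 : ∀ x y z : B, precB (bulB x y) z = bulB x (precB y z))
    (hφ : ∀ a b : A, φ (a * b) = bulB (φ a) (φ b))
    (hFemp : F M.emp = 0)
    (hFcons : ∀ (a : A) (u : Q),
      F (M.cons a u) = M.counit u • φ a + precB (φ a) (F u)) :
    ∀ (n : ℕ) (l l' : List A), l.length + l'.length ≤ n →
    F (M.mul (M.ofWord l) (M.ofWord l')) =
      M.counit (M.ofWord l) • F (M.ofWord l') + M.counit (M.ofWord l') • F (M.ofWord l) +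
        (precB (F (M.ofWord l)) (F (M.ofWord l')) +
          precB (F (M.ofWord l')) (F (M.ofWord l)) +
          bulB (F (M.ofWord l)) (F (M.ofWord l'))) := by
  intro n
  induction n with
  | zero =>
      intro l l' h
      have hl : l = [] := by cases l <;> simp_all
      have hl' : l' = [] := by cases l' <;> simp_all
      subst hl; subst hl'
      rw [QShModel.ofWord_nil, M.mul_emp_left]
      simp [hFemp, M.counit_emp]
  | succ n ih =>
      intro l l' h
      match l, l' with
      | [], l' =>
          rw [QShModel.ofWord_nil, M.mul_emp_left]
          simp [hFemp, M.counit_emp]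
      | a :: t, [] =>
          rw [QShModel.ofWord_nil (M := M.toQShModel), M.mul_emp_right]
          simp [hFemp, M.counit_emp]
      | a :: t, b :: t' =>
          rw [QShModel.ofWord_cons, QShModel.ofWord_cons]
          exact key_mul_step hcomm hQS1 hQS2 hφ hFcons a b (M.ofWord t) (M.ofWord t')
            (ih t (b :: t') (by simp at h ⊢; omega))
            (ih (a :: t) t' (by simp at h ⊢; omega))
            (ih t t' (by simp at h ⊢; omega))

/-- The bilinear right-hand side of the `mul` statement. -/
def mulRHS (M : QShFullModel k A Q) (precB bulB : B →ₗ[k] B →ₗ[k] B) (F : Q →ₗ[k] B) :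
    Q →ₗ[k] Q →ₗ[k] B :=
  LinearMap.mk₂ k
    (fun u v => M.counit u • F v + M.counit v • F u +
      (precB (F u) (F v) + precB (F v) (F u) + bulB (F u) (F v)))
    (fun u u' v => by
      simp only [map_add, add_smul, smul_add, LinearMap.add_apply]
      abel)
    (fun c u v => by
      simp only [map_smul, LinearMap.smul_apply, smul_add, smul_assoc]
      rw [smul_comm (M.counit v) c])
    (fun u v v' => by
      simp only [map_add, add_smul, smul_add, LinearMap.add_apply]
      abel)
    (fun c u v => by
      simp only [map_smul, LinearMap.smul_apply, smul_add, smul_assoc]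
      rw [smul_comm (M.counit u) c])

lemma key_mul
    (hcomm : ∀ x y : B, bulB x y = bulB y x)
    (hQS1 : ∀ x y z : B,
      precB (precB x y) z = precB x (precB y z + precB z y + bulB y z))
    (hQS2 : ∀ x y z : B, precB (bulB x y) z = bulB x (precB y z))
    (hφ : ∀ a b : A, φ (a * b) = bulB (φ a) (φ b))
    (hFemp : F M.emp = 0)
    (hFcons : ∀ (a : A) (u : Q),
      F (M.cons a u) = M.counit u • φ a + precB (φ a) (F u)) :
    ∀ u v : Q, F (M.mul u v) =
      M.counit u • F v + M.counit v • F u +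
        (precB (F u) (F v) + precB (F v) (F u) + bulB (F u) (F v)) := by
  have h : M.mul.compr₂ F = mulRHS M precB bulB F := by
    apply word_ext₂ M.toQShModel
    intro l l'
    have := key_mul_words (M := M) (precB := precB) (bulB := bulB) (φ := φ)
      hcomm hQS1 hQS2 hφ hFemp hFcons (l.length + l'.length) l l' le_rfl
    exact this
  intro u v
  calc F (M.mul u v) = (M.mul.compr₂ F) u v := rfl
    _ = mulRHS M precB bulB F u v := by rw [h]
    _ = _ := rfl

end Mult

section Pos

variable (M : QShFullModel k A Q) (precB bulB : B →ₗ[k] B →ₗ[k] B) (φ : A →ₗ[k] B)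

/-- The span of words of positive length. -/
def posWords (M' : QShModel k A Q) : Submodule k Q :=
  Submodule.span k (M'.ofWord '' {l | l ≠ []})

lemma posWords_le_ker (M' : QShModel k A Q) :
    posWords M' ≤ LinearMap.ker M'.counit := by
  rw [posWords, Submodule.span_le]
  rintro _ ⟨l, hl, rfl⟩
  match l with
  | [] => exact absurd rfl hl
  | a :: t => exact LinearMap.mem_ker.mpr (M'.counit_ofWord_cons a t)

lemma ker_eq_posWords (M' : QShModel k A Q) :
    LinearMap.ker M'.counit = posWords M' := by
  refine le_antisymm ?_ (posWords_le_ker M')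
  intro x hx
  have htop : (⊤ : Submodule k Q) ≤ posWords M' ⊔ (k ∙ M'.emp) := by
    rw [← M'.span_words', Submodule.span_le]
    rintro _ ⟨l, rfl⟩
    match l with
    | [] =>
        exact Submodule.mem_sup_right (Submodule.mem_span_singleton.mpr ⟨1, one_smul _ _⟩)
    | a :: t =>
        exact Submodule.mem_sup_left
          (Submodule.subset_span ⟨a :: t, List.cons_ne_nil a t, rfl⟩)
  have hx2 : x ∈ posWords M' ⊔ (k ∙ M'.emp) := htop Submodule.mem_top
  obtain ⟨y, hy, z, hz, hyz⟩ := Submodule.mem_sup.mp hx2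
  obtain ⟨c, rfl⟩ := Submodule.mem_span_singleton.mp hz
  subst hyz
  have h0 : M'.counit y = 0 := LinearMap.mem_ker.mp (posWords_le_ker M' hy)
  have hc : c = 0 := by
    have := LinearMap.mem_ker.mp hx
    rw [map_add, h0, zero_add, map_smul, M'.counit_emp, smul_eq_mul, mul_one] at this
    exact this
  rw [hc, zero_smul, add_zero]
  exact hy

variable {M precB bulB φ}
variable {F : Q →ₗ[k] B}

lemma key_prec
    (hcomm : ∀ x y : B, bulB x y = bulB y x)
    (hQS1 : ∀ x y z : B,
      precB (precB x y) z = precB x (precB y z + precB z y + bulB y z))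
    (hQS2 : ∀ x y z : B, precB (bulB x y) z = bulB x (precB y z))
    (hφ : ∀ a b : A, φ (a * b) = bulB (φ a) (φ b))
    (hFemp : F M.emp = 0)
    (hFcons : ∀ (a : A) (u : Q),
      F (M.cons a u) = M.counit u • φ a + precB (φ a) (F u)) :
    ∀ u ∈ LinearMap.ker M.counit, ∀ v ∈ LinearMap.ker M.counit,
      F (M.prec u v) = precB (F u) (F v) := by
  have hmul := key_mul (M := M) hcomm hQS1 hQS2 hφ hFemp hFcons
  intro u hu v hv
  rw [ker_eq_posWords M.toQShModel] at hu hv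
  induction hu using Submodule.span_induction with
  | mem u hu =>
      obtain ⟨l, hl, rfl⟩ := hu
      match l with
      | [] => exact absurd rfl hl
      | a :: t =>
        induction hv using Submodule.span_induction with
        | mem v hv =>
            obtain ⟨l', hl', rfl⟩ := hv
            have hεv : M.counit (M.ofWord l') = 0 := by
              match l' with
              | [] => exact absurd rfl hl'
              | b :: t' => exact M.counit_ofWord_cons b t'
            rw [QShModel.ofWord_cons, M.prec_cons, hFcons, hFcons,
              counit_mul M.toQShModel, hmul, hεv]
            simp only [mul_zero, zero_smul, zero_add, add_zero]
            exact (B_prec_ident precB bulB hQS1 (φ a) (F (M.ofWord t))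
              (F (M.ofWord l')) (M.counit (M.ofWord t))).symm
        | zero => simp
        | add v w hv hw ihv ihw => simp only [map_add, ihv, ihw]
        | smul c v hv ihv => simp only [map_smul, ihv]
  | zero => simp
  | add u w hu hw ihu ihw => simp only [map_add, ihu, ihw, LinearMap.add_apply]
  | smul c u hu ihu => simp only [map_smul, ihu, LinearMap.smul_apply]

lemma key_bul
    (hcomm : ∀ x y : B, bulB x y = bulB y x)
    (hQS1 : ∀ x y z : B,
      precB (precB x y) z = precB x (precB y z + precB z y + bulB y z))
    (hQS2 : ∀ x y z : B, precB (bulB x y) z = bulB x (precB y z))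
    (hφ : ∀ a b : A, φ (a * b) = bulB (φ a) (φ b))
    (hFemp : F M.emp = 0)
    (hFcons : ∀ (a : A) (u : Q),
      F (M.cons a u) = M.counit u • φ a + precB (φ a) (F u)) :
    ∀ u ∈ LinearMap.ker M.counit, ∀ v ∈ LinearMap.ker M.counit,
      F (M.bul u v) = bulB (F u) (F v) := by
  have hmul := key_mul (M := M) hcomm hQS1 hQS2 hφ hFemp hFcons
  intro u hu v hv
  rw [ker_eq_posWords M.toQShModel] at hu hv
  induction hu using Submodule.span_induction with
  | mem u hu =>
      obtain ⟨l, hl, rfl⟩ := hu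
      match l with
      | [] => exact absurd rfl hl
      | a :: t =>
        induction hv using Submodule.span_induction with
        | mem v hv =>
            obtain ⟨l', hl', rfl⟩ := hv
            match l' with
            | [] => exact absurd rfl hl'
            | b :: t' =>
              rw [QShModel.ofWord_cons, QShModel.ofWord_cons, M.bul_cons, hFcons,
                counit_mul M.toQShModel, hmul, hFcons, hFcons, hφ]
              exact (B_bul_ident precB bulB hcomm hQS1 hQS2 (φ a) (φ b)
                (F (M.ofWord t)) (F (M.ofWord t'))
                (M.counit (M.ofWord t)) (M.counit (M.ofWord t'))).symm
        | zero => simp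
        | add v w hv hw ihv ihw => simp only [map_add, ihv, ihw]
        | smul c v hv ihv => simp only [map_smul, ihv]
  | zero => simp
  | add u w hu hw ihu ihw => simp only [map_add, ihu, ihw, LinearMap.add_apply]
  | smul c u hu ihu => simp only [map_smul, ihu, LinearMap.smul_apply]

/-- Any quasi-shuffle morphism is given on words by iterated `≺`. -/
lemma word_formula
    (F : Q →ₗ[k] B)
    (hA : ∀ a : A, F (M.cons a M.emp) = φ a)
    (hprec : ∀ u ∈ LinearMap.ker M.counit, ∀ v ∈ LinearMap.ker M.counit,
      F (M.prec u v) = precB (F u) (F v)) :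
    ∀ (l : List A) (a : A),
      F (M.ofWord (l ++ [a])) = l.foldr (fun x acc => precB (φ x) acc) (φ a) := by
  intro l
  induction l with
  | nil => intro a; exact hA a
  | cons x l ih =>
      intro a
      have hne : l ++ [a] ≠ [] := by simp
      obtain ⟨c, t, hct⟩ := List.exists_cons_of_ne_nil hne
      have hmem : M.ofWord (l ++ [a]) ∈ LinearMap.ker M.counit := by
        rw [hct]; exact LinearMap.mem_ker.mpr (M.counit_ofWord_cons c t)
      have hx : M.cons x M.emp ∈ LinearMap.ker M.counit :=
        LinearMap.mem_ker.mpr (M.counit_cons x M.emp)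
      have key : M.ofWord ((x :: l) ++ [a]) = M.prec (M.cons x M.emp) (M.ofWord (l ++ [a])) := by
        rw [M.prec_cons, M.mul_emp_left]
        rfl
      rw [key, hprec _ hx _ hmem, hA, ih a]
      rfl

end Pos

end PBWAux
end QShPaper

open QShPaper in
/-- **quasi-shuffle PBW theorem.** For a nonunital commutative algebra `A`
and a quasi-shuffle algebra `(B, ≺, •)`, every algebra morphism `φ : (A,·) → (B,•)`
extends uniquely to a morphism of quasi-shuffle algebras `QSh⁺(A) → B`, which sends the
word `a_1…a_n` to `φ(a_1) ≺ (φ(a_2) ≺ (… ≺ φ(a_n)))`; moreover every quasi-shuffle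
morphism `QSh⁺(A) → B` restricts to an algebra morphism on `A`. In categorical terms,
Hoffman's functor `A ↦ QSh⁺(A)` is left adjoint to the forgetful functor from
quasi-shuffle algebras to nonunital commutative algebras. -/
theorem stmt8_quasi_shuffle_PBW
    (k : Type*) [Field k] [CharZero k]
    (A : Type*) [NonUnitalCommRing A] [Module k A] [SMulCommClass k A A] [IsScalarTower k A A]
    (Q : Type*) [AddCommGroup Q] [Module k Q]
    (M : QShFullModel k A Q)
    -- `(B, ≺, •)` is a quasi-shuffle algebra
    (B : Type*) [AddCommGroup B] [Module k B]
    (precB bulB : B →ₗ[k] B →ₗ[k] B)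
    (hcomm : ∀ x y : B, bulB x y = bulB y x)
    (hassoc : ∀ x y z : B, bulB (bulB x y) z = bulB x (bulB y z))
    (hQS1 : ∀ x y z : B,
      precB (precB x y) z = precB x (precB y z + precB z y + bulB y z))
    (hQS2 : ∀ x y z : B, precB (bulB x y) z = bulB x (precB y z)) :
    ∀ φ : A →ₗ[k] B, (∀ a b : A, φ (a * b) = bulB (φ a) (φ b)) →
      -- unique extension to a quasi-shuffle morphism on `QSh⁺(A)`
      (∃! F : Q →ₗ[k] B,
        F M.emp = 0 ∧
        (∀ a : A, F (M.cons a M.emp) = φ a) ∧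
        (∀ u ∈ LinearMap.ker M.counit, ∀ v ∈ LinearMap.ker M.counit,
          F (M.prec u v) = precB (F u) (F v)) ∧
        (∀ u ∈ LinearMap.ker M.counit, ∀ v ∈ LinearMap.ker M.counit,
          F (M.bul u v) = bulB (F u) (F v))) ∧
      -- the extension is given on words by iterated `≺`
      (∀ F : Q →ₗ[k] B,
        F M.emp = 0 →
        (∀ a : A, F (M.cons a M.emp) = φ a) →
        (∀ u ∈ LinearMap.ker M.counit, ∀ v ∈ LinearMap.ker M.counit,
          F (M.prec u v) = precB (F u) (F v)) →
        (∀ u ∈ LinearMap.ker M.counit, ∀ v ∈ LinearMap.ker M.counit,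
          F (M.bul u v) = bulB (F u) (F v)) →
        ∀ (l : List A) (a : A),
          F (M.ofWord (l ++ [a])) =
            l.foldr (fun x acc => precB (φ x) acc) (φ a)) ∧
      -- conversely, restriction to `A` of a quasi-shuffle morphism is an algebra morphism
      (∀ F : Q →ₗ[k] B,
        F M.emp = 0 →
        (∀ u ∈ LinearMap.ker M.counit, ∀ v ∈ LinearMap.ker M.counit,
          F (M.bul u v) = bulB (F u) (F v)) →
        ∀ a b : A, F (M.cons (a * b) M.emp) =
          bulB (F (M.cons a M.emp)) (F (M.cons b M.emp))) := by
  intro φ hφ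
  obtain ⟨F, hFemp, hFcons⟩ := exists_recF M.toQShModel precB φ
  have hA : ∀ a : A, F (M.cons a M.emp) = φ a := by
    intro a
    rw [hFcons, M.counit_emp, one_smul, hFemp, map_zero, add_zero]
  have hprec := key_prec (M := M) hcomm hQS1 hQS2 hφ hFemp hFcons
  have hbul := key_bul (M := M) hcomm hQS1 hQS2 hφ hFemp hFcons
  refine ⟨⟨F, ⟨hFemp, hA, hprec, hbul⟩, ?_⟩, ?_, ?_⟩
  · -- uniqueness
    rintro G ⟨hGemp, hGA, hGprec, hGbul⟩
    apply LinearMap.ext_on M.toQShModel.span_words'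
    intro x hx
    obtain ⟨l, rfl⟩ := hx
    show G (M.ofWord l) = F (M.ofWord l)
    match l with
    | [] =>
        show G M.emp = F M.emp
        rw [hGemp, hFemp]
    | a :: t =>
        obtain ⟨l', b, hl⟩ : ∃ L b, a :: t = L ++ [b] := by
          rcases (a :: t).eq_nil_or_concat' with h | h
          · simp at h
          · exact h
        rw [hl, word_formula G hGA hGprec, word_formula F hA hprec]
  · -- the word formula
    intro G _ hGA hGprec _
    exact word_formula G hGA hGprec
  · -- converse
    intro G _ hGbul a b
    have ha : M.cons a M.emp ∈ LinearMap.ker M.counit :=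
      LinearMap.mem_ker.mpr (M.counit_cons a M.emp)
    have hb : M.cons b M.emp ∈ LinearMap.ker M.counit :=
      LinearMap.mem_ker.mpr (M.counit_cons b M.emp)
    have key : M.cons (a * b) M.emp = M.bul (M.cons a M.emp) (M.cons b M.emp) := by
      rw [M.bul_cons, M.mul_emp_left]
    rw [key, hGbul _ ha _ hb]
end
end

section
/- Let (A, p₊) be an idempotent Rota–Baxter algebra of weight −1 and j ∈ U(QSh(A), A) as above. Define j₊, j₋ ∈ U(QSh(A), A) by j₊(1) = j₋(1) = 1_A and, for r ≥ 1 and a word 𝐚 = a_1…a_r: j₊(𝐚) = (−1)^{r−1} p₊( p₋( … ( p₋( p₋(a_1) ·_A a_2 ) ·_A a_3 ) … ·_A a_{r−1} ) ·_A a_r ) and j₋(𝐚) = (−1)^{r} p₋( p₋( … ( p₋( p₋(a_1) ·_A a_2 ) ·_A a_3 ) … ·_A a_{r−1} ) ·_A a_r ). Then j₊ ∈ U(QSh(A), A₊), j₋ ∈ U(QSh(A), A₋), and j₋ * j = j₊, i.e. (j₊, j₋) is the Birkhoff decomposition of j. Moreover, if A is commutative, then j₊ and j₋ are characters: j₋(𝐚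 ⧢ 𝐛) = j₋(𝐚) j₋(𝐛) and likewise for j₊. -/
open scoped TensorProduct
open TensorProduct

noncomputable section

namespace QShPaper

/-- The distinguished element `j ∈ U(QSh(A), A)`: `j(1) = 1_A`, `j(a) = a` on letters, and
`j` vanishes on words of length `≥ 2`. -/
def QShModel.IsJ {k : Type*} [Field k] {A Q : Type*} [Ring A] [Algebra k A]
    [AddCommGroup Q] [Module k Q] (M : QShModel k A Q) (j : Q →ₗ[k] A) : Prop :=
  j M.emp = 1 ∧ (∀ a : A, j (M.cons a M.emp) = a) ∧
    ∀ (a b : A) (u : Q), j (M.cons a (M.cons b u)) = 0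

end QShPaper

namespace QShPaper

/-- The iterated Rota–Baxter expression `p₋(…(p₋(p₋(a_1)·a_2)·a_3)…·a_{r−1})·a_r`
(without the outermost `p₋`): `rbChain pm a [b_1,…,b_m] = pm(…(pm(a)·b_1)…)·b_m`. -/
def rbChain {k : Type*} [Field k] {A : Type*} [Ring A] [Algebra k A]
    (pm : A →ₗ[k] A) (a : A) (l : List A) : A :=
  l.foldl (fun x b => pm x * b) a

end QShPaper


namespace QShPaper

/-! ### Auxiliary machinery for Statement 15 -/

def qsh {A : Type*} [Mul A] : List A → List A → List (List A)
  | [], v => [v]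
  | u, [] => [u]
  | a :: u, b :: v =>
      ((qsh u (b :: v)).map (a :: ·)) ++ ((qsh (a :: u) v).map (b :: ·)) ++
        ((qsh u v).map ((a * b) :: ·))
  termination_by u v => u.length + v.length

section QshRing
variable {A : Type*} [Ring A]

lemma qsh_nil_left (v : List A) : qsh [] v = [v] := by cases v <;> simp [qsh]
lemma qsh_nil_right (u : List A) : qsh u [] = [u] := by cases u <;> simp [qsh]
lemma qsh_cons (a b : A) (u v : List A) :
    qsh (a :: u) (b :: v) =
      ((qsh u (b :: v)).map (a :: ·)) ++ ((qsh (a :: u) v).map (b :: ·)) ++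
        ((qsh u v).map ((a * b) :: ·)) := by rw [qsh]

lemma qsh_snoc_sum :
    ∀ (n : ℕ) (u v : List A) (a b : A) (g : List A → A), u.length + v.length ≤ n →
    ((qsh (u ++ [a]) (v ++ [b])).map g).sum =
      ((qsh u (v ++ [b])).map (fun w => g (w ++ [a]))).sum +
      ((qsh (u ++ [a]) v).map (fun w => g (w ++ [b]))).sum +
      ((qsh u v).map (fun w => g (w ++ [a * b]))).sum := by
  intro n
  induction n with
  | zero =>
      intro u v a b g h
      have hu : u = [] := List.eq_nil_of_length_eq_zero (by omega)
      have hv : v = [] := List.eq_nil_of_length_eq_zero (by omega)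
      subst hu; subst hv
      simp only [List.nil_append, qsh_cons, qsh_nil_left, qsh_nil_right,
        List.map_append, List.sum_append, List.map_map, List.map_cons, List.map_nil,
        List.sum_cons, List.sum_nil, Function.comp_def, List.cons_append]
      abel
  | succ n ih =>
      intro u v a b g h
      match u, v with
      | [], [] =>
          simp only [List.nil_append, qsh_cons, qsh_nil_left, qsh_nil_right,
            List.map_append, List.sum_append, List.map_map, List.map_cons, List.map_nil,
            List.sum_cons, List.sum_nil, Function.comp_def, List.cons_append]
          abel
      | [], d :: v' =>
          have key := ih [] v' a b (fun w => g (d :: w)) (by simp at h ⊢; omega)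
          simp only [List.nil_append, List.cons_append, qsh_cons, qsh_nil_left,
            qsh_nil_right, List.map_append, List.sum_append, List.map_map,
            List.map_cons, List.map_nil, List.sum_cons, List.sum_nil,
            Function.comp_def, List.append_assoc] at key ⊢
          rw [key]
          abel
      | c :: u', [] =>
          have key := ih u' [] a b (fun w => g (c :: w)) (by simp at h ⊢; omega)
          simp only [List.nil_append, List.cons_append, qsh_cons, qsh_nil_left,
            qsh_nil_right, List.map_append, List.sum_append, List.map_map,
            List.map_cons, List.map_nil, List.sum_cons, List.sum_nil,
            Function.comp_def, List.append_assoc] at key ⊢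
          rw [key]
          abel
      | c :: u', d :: v' =>
          have k1 := ih u' (d :: v') a b (fun w => g (c :: w)) (by simp at h ⊢; omega)
          have k2 := ih (c :: u') v' a b (fun w => g (d :: w)) (by simp at h ⊢; omega)
          have k3 := ih u' v' a b (fun w => g ((c * d) :: w)) (by simp at h ⊢; omega)
          simp only [List.nil_append, List.cons_append, qsh_cons, qsh_nil_left,
            qsh_nil_right, List.map_append, List.sum_append, List.map_map,
            List.map_cons, List.map_nil, List.sum_cons, List.sum_nil,
            Function.comp_def, List.append_assoc] at k1 k2 k3 ⊢
          rw [k1, k2, k3]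
          abel

end QshRing

section WordMaps

variable {k : Type*} [Field k] {A : Type*} [Ring A] [Algebra k A] (p : A →ₗ[k] A)

/-- The value of `j₋` on the word `w`. -/
def jmW : List A → A
  | [] => 1
  | a :: l => ((-1 : k)) ^ (l.length + 1) •
      ((LinearMap.id : A →ₗ[k] A) - p) (rbChain ((LinearMap.id : A →ₗ[k] A) - p) a l)

/-- The value of `j₊` on the word `w`. -/
def jpW : List A → A
  | [] => 1
  | a :: l => ((-1 : k)) ^ l.length • p (rbChain ((LinearMap.id : A →ₗ[k] A) - p) a l)

lemma rbChain_snoc (pm : A →ₗ[k] A) (a : A) (l : List A) (b : A) :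
    rbChain pm a (l ++ [b]) = pm (rbChain pm a l) * b := by
  simp [rbChain]

lemma jmW_snoc (w : List A) (a : A) :
    jmW p (w ++ [a]) = -(((LinearMap.id : A →ₗ[k] A) - p) (jmW p w * a)) := by
  cases w with
  | nil => simp [jmW, rbChain]
  | cons c l =>
      show jmW p (c :: (l ++ [a])) = _
      rw [jmW, jmW]
      have h : (l ++ [a]).length + 1 = (l.length + 1) + 1 := by simp
      rw [h, pow_succ, mul_neg_one, neg_smul, rbChain_snoc, smul_mul_assoc, map_smul]

lemma jpW_snoc (w : List A) (a : A) :
    jpW p (w ++ [a]) = p (jmW p w * a) := by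
  cases w with
  | nil => simp [jpW, jmW, rbChain]
  | cons c l =>
      show jpW p (c :: (l ++ [a])) = _
      rw [jpW, jmW]
      have h : (l ++ [a]).length = l.length + 1 := by simp
      rw [h, rbChain_snoc, smul_mul_assoc, map_smul]

lemma qRB (hRB : ∀ x y : A, p x * p y = p (x * p y) + p (p x * y) - p (x * y)) (x y : A) :
    ((LinearMap.id : A →ₗ[k] A) - p) x * ((LinearMap.id : A →ₗ[k] A) - p) y =
      ((LinearMap.id : A →ₗ[k] A) - p) (x * ((LinearMap.id : A →ₗ[k] A) - p) y) +
      ((LinearMap.id : A →ₗ[k] A) - p) (((LinearMap.id : A →ₗ[k] A) - p) x * y) -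
      ((LinearMap.id : A →ₗ[k] A) - p) (x * y) := by
  simp only [LinearMap.sub_apply, LinearMap.id_apply, mul_sub, sub_mul, map_sub]
  rw [hRB x y]
  abel

lemma sum_map_snocJm (L : List (List A)) (a : A) :
    (L.map (fun w => jmW p (w ++ [a]))).sum =
      -(((LinearMap.id : A →ₗ[k] A) - p) ((L.map (jmW p)).sum * a)) := by
  induction L with
  | nil => simp
  | cons w L ih =>
      simp only [List.map_cons, List.sum_cons]
      rw [ih, jmW_snoc, add_mul, map_add, neg_add]

lemma sum_map_snocJp (L : List (List A)) (a : A) :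
    (L.map (fun w => jpW p (w ++ [a]))).sum =
      p ((L.map (jmW p)).sum * a) := by
  induction L with
  | nil => simp
  | cons w L ih =>
      simp only [List.map_cons, List.sum_cons]
      rw [ih, jpW_snoc, add_mul, map_add]

lemma jm_char (hc : ∀ x y : A, x * y = y * x)
    (hRB : ∀ x y : A, p x * p y = p (x * p y) + p (p x * y) - p (x * y)) :
    ∀ (n : ℕ) (u v : List A), u.length + v.length ≤ n →
    ((qsh u v).map (jmW p)).sum = jmW p u * jmW p v := by
  letI : CommRing A := { (inferInstance : Ring A) with mul_comm := hc }
  intro n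
  induction n with
  | zero =>
      intro u v h
      have hu : u = [] := List.eq_nil_of_length_eq_zero (by omega)
      subst hu
      simp [qsh_nil_left, jmW]
  | succ n ih =>
      intro u v h
      rcases u.eq_nil_or_concat' with rfl | ⟨u₂, a, rfl⟩
      · simp [qsh_nil_left, jmW]
      rcases v.eq_nil_or_concat' with rfl | ⟨v₂, b, rfl⟩
      · simp [qsh_nil_right, jmW]
      simp only [List.length_append, List.length_cons, List.length_nil] at h
      rw [qsh_snoc_sum (u₂.length + v₂.length) u₂ v₂ a b (jmW p) le_rfl,
        sum_map_snocJm, sum_map_snocJm, sum_map_snocJm,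
        ih u₂ (v₂ ++ [b]) (by simp; omega), ih (u₂ ++ [a]) v₂ (by simp; omega),
        ih u₂ v₂ (by omega), jmW_snoc, jmW_snoc,
        show jmW p u₂ * -(((LinearMap.id : A →ₗ[k] A) - p) (jmW p v₂ * b)) * a
            = -((jmW p u₂ * a) * (((LinearMap.id : A →ₗ[k] A) - p) (jmW p v₂ * b)))
          from by ring,
        show -(((LinearMap.id : A →ₗ[k] A) - p) (jmW p u₂ * a)) * jmW p v₂ * b
            = -((((LinearMap.id : A →ₗ[k] A) - p) (jmW p u₂ * a)) * (jmW p v₂ * b))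
          from by ring,
        show jmW p u₂ * jmW p v₂ * (a * b) = (jmW p u₂ * a) * (jmW p v₂ * b) from by ring,
        map_neg, map_neg]
      linear_combination -(qRB p hRB (jmW p u₂ * a) (jmW p v₂ * b))

lemma jp_char (hc : ∀ x y : A, x * y = y * x)
    (hRB : ∀ x y : A, p x * p y = p (x * p y) + p (p x * y) - p (x * y)) :
    ∀ (u v : List A), ((qsh u v).map (jpW p)).sum = jpW p u * jpW p v := by
  letI : CommRing A := { (inferInstance : Ring A) with mul_comm := hc }
  intro u v
  rcases u.eq_nil_or_concat' with rfl | ⟨u₂, a, rfl⟩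
  · simp [qsh_nil_left, jpW]
  rcases v.eq_nil_or_concat' with rfl | ⟨v₂, b, rfl⟩
  · simp [qsh_nil_right, jpW]
  rw [qsh_snoc_sum (u₂.length + v₂.length) u₂ v₂ a b (jpW p) le_rfl,
    sum_map_snocJp, sum_map_snocJp, sum_map_snocJp,
    jm_char p hc hRB (u₂.length + (v₂ ++ [b]).length) u₂ (v₂ ++ [b]) le_rfl,
    jm_char p hc hRB ((u₂ ++ [a]).length + v₂.length) (u₂ ++ [a]) v₂ le_rfl,
    jm_char p hc hRB (u₂.length + v₂.length) u₂ v₂ le_rfl,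
    jmW_snoc, jmW_snoc, jpW_snoc, jpW_snoc,
    show jmW p u₂ * -(((LinearMap.id : A →ₗ[k] A) - p) (jmW p v₂ * b)) * a
        = -((jmW p u₂ * a) * (((LinearMap.id : A →ₗ[k] A) - p) (jmW p v₂ * b)))
      from by ring,
    show -(((LinearMap.id : A →ₗ[k] A) - p) (jmW p u₂ * a)) * jmW p v₂ * b
        = -((((LinearMap.id : A →ₗ[k] A) - p) (jmW p u₂ * a)) * (jmW p v₂ * b))
      from by ring,
    show jmW p u₂ * jmW p v₂ * (a * b) = (jmW p u₂ * a) * (jmW p v₂ * b) from by ring,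
    map_neg, map_neg]
  have expand : ∀ z : A, ((LinearMap.id : A →ₗ[k] A) - p) z = z - p z := fun z => rfl
  rw [expand (jmW p u₂ * a), expand (jmW p v₂ * b), mul_sub, sub_mul, map_sub, map_sub]
  linear_combination -(hRB (jmW p u₂ * a) (jmW p v₂ * b))

end WordMaps

section QLevel

variable {k : Type*} [Field k] {A : Type*} [Ring A] [Algebra k A]
variable {Q : Type*} [AddCommGroup Q] [Module k Q] (M : QShModel k A Q)

lemma ofWord_nil : M.ofWord [] = M.emp := rfl
lemma ofWord_cons (a : A) (l : List A) : M.ofWord (a :: l) = M.cons a (M.ofWord l) := rfl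

lemma mul_ofWord :
    ∀ (n : ℕ) (u v : List A), u.length + v.length ≤ n →
      M.mul (M.ofWord u) (M.ofWord v) = ((qsh u v).map M.ofWord).sum := by
  intro n
  induction n with
  | zero =>
      intro u v h
      have hu : u = [] := List.eq_nil_of_length_eq_zero (by omega)
      have hv : v = [] := List.eq_nil_of_length_eq_zero (by omega)
      subst hu; subst hv
      simp [qsh_nil_left, ofWord_nil, M.mul_emp_left]
  | succ n ih =>
      intro u v h
      match u, v with
      | [], v => simp [qsh_nil_left, ofWord_nil, M.mul_emp_left]
      | a :: u', [] => simp [qsh_nil_right, ofWord_nil, M.mul_emp_right]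
      | a :: u', b :: v' =>
          simp only [List.length_cons] at h
          rw [ofWord_cons, ofWord_cons, M.mul_cons, ← ofWord_cons, ← ofWord_cons,
            ih u' (b :: v') (by simp; omega), ih (a :: u') v' (by simp; omega),
            ih u' v' (by omega),
            map_list_sum (M.cons a), map_list_sum (M.cons b), map_list_sum (M.cons (a * b)),
            qsh_cons]
          simp only [List.map_append, List.sum_append, List.map_map, Function.comp_def,
            ofWord_cons]

variable (j : Q →ₗ[k] A)

lemma conv_emp (f g : Q →ₗ[k] A) :
    conv k A M.comul f g M.emp = f M.emp * g M.emp := by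
  show LinearMap.mul' k A (TensorProduct.map f g (M.comul M.emp)) = _
  rw [M.comul_emp, TensorProduct.map_tmul, LinearMap.mul'_apply]

lemma conv_cons (f g : Q →ₗ[k] A) (a : A) (u : Q) :
    conv k A M.comul f g (M.cons a u) =
      f M.emp * g (M.cons a u) + conv k A M.comul (f ∘ₗ M.cons a) g u := by
  show LinearMap.mul' k A (TensorProduct.map f g (M.comul (M.cons a u))) = _
  rw [M.comul_cons, map_add, map_add, TensorProduct.map_tmul, LinearMap.mul'_apply,
    ← LinearMap.comp_apply (TensorProduct.map f g), ← TensorProduct.map_comp,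
    LinearMap.comp_id]
  rfl

lemma convL (hj : M.IsJ j) :
    ∀ (l : List A) (f : Q →ₗ[k] A) (a : A),
      conv k A M.comul f j (M.ofWord (l ++ [a])) =
        f (M.ofWord l) * a + f (M.ofWord (l ++ [a])) := by
  intro l
  induction l with
  | nil =>
      intro f a
      rw [show M.ofWord ([] ++ [a]) = M.cons a M.emp from rfl, conv_cons, conv_emp,
        hj.1, hj.2.1, mul_one]
      rfl
  | cons c l' ih =>
      intro f a
      rw [show M.ofWord ((c :: l') ++ [a]) = M.cons c (M.ofWord (l' ++ [a])) from rfl,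
        conv_cons]
      have hzero : j (M.cons c (M.ofWord (l' ++ [a]))) = 0 := by
        cases l' with
        | nil => exact hj.2.2 c a M.emp
        | cons d t =>
            rw [show M.ofWord ((d :: t) ++ [a]) = M.cons d (M.ofWord (t ++ [a])) from rfl]
            exact hj.2.2 c d _
      rw [hzero, mul_zero, zero_add, ih (f ∘ₗ M.cons c) a]
      rfl

end QLevel

end QShPaper

open QShPaper in
/-- Let `(A, p₊)` be an idempotent Rota–Baxter algebra of weight `−1`.
The maps `j₊, j₋` defined on a word `𝐚 = a_1…a_r` by
`j₊(𝐚) = (−1)^{r−1} p₊(p₋(…(p₋(a_1)·a_2)…)·a_r)` and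
`j₋(𝐚) = (−1)^r p₋(p₋(…(p₋(a_1)·a_2)…)·a_r)` satisfy `j₊ ∈ U(QSh(A), A₊)`,
`j₋ ∈ U(QSh(A), A₋)` and `j₋ * j = j₊`: they are the Birkhoff decomposition of `j`.
If moreover `A` is commutative, `j₊` and `j₋` are characters. -/
theorem stmt15_birkhoff_decomposition_of_j
    (k : Type*) [Field k] [CharZero k]
    (A : Type*) [Ring A] [Algebra k A]
    (p : A →ₗ[k] A) (hidem : p ∘ₗ p = p)
    (hRB : ∀ x y : A, p x * p y = p (x * p y) + p (p x * y) - p (x * y))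
    (Q : Type*) [AddCommGroup Q] [Module k Q]
    (M : QShModel k A Q) (j : Q →ₗ[k] A) (hj : M.IsJ j)
    (jp jm : Q →ₗ[k] A)
    (hjp1 : jp M.emp = 1)
    (hjp : ∀ (a : A) (l : List A),
      jp (M.ofWord (a :: l)) =
        ((-1 : k)) ^ l.length • p (rbChain ((LinearMap.id : A →ₗ[k] A) - p) a l))
    (hjm1 : jm M.emp = 1)
    (hjm : ∀ (a : A) (l : List A),
      jm (M.ofWord (a :: l)) =
        ((-1 : k)) ^ (l.length + 1) •
          ((LinearMap.id : A →ₗ[k] A) - p) (rbChain ((LinearMap.id : A →ₗ[k] A) - p) a l)) :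
    -- `j₊ ∈ U(QSh(A), A₊)` and `j₋ ∈ U(QSh(A), A₋)`
    (∀ x ∈ LinearMap.ker M.counit, jp x ∈ LinearMap.range p) ∧
    (∀ x ∈ LinearMap.ker M.counit,
      jm x ∈ LinearMap.range ((LinearMap.id : A →ₗ[k] A) - p)) ∧
    -- `j₋ * j = j₊`
    conv k A M.comul jm j = jp ∧
    -- if `A` is commutative, `j₊` and `j₋` are characters
    ((∀ x y : A, x * y = y * x) →
      (∀ u v : Q, jp (M.mul u v) = jp u * jp v) ∧
      (∀ u v : Q, jm (M.mul u v) = jm u * jm v)) := by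
  classical
  -- values of `jm`, `jp` on words
  have jm_ofWord : ∀ w : List A, jm (M.ofWord w) = jmW p w := by
    intro w
    cases w with
    | nil => simpa [jmW, ofWord_nil] using hjm1
    | cons a l => rw [hjm a l, jmW]
  have jp_ofWord : ∀ w : List A, jp (M.ofWord w) = jpW p w := by
    intro w
    cases w with
    | nil => simpa [jpW, ofWord_nil] using hjp1
    | cons a l => rw [hjp a l, jpW]
  -- the span of nonempty words
  set W : Submodule k Q := Submodule.span k {x | ∃ (a : A) (l : List A), x = M.ofWord (a :: l)}
    with hW
  have hker : ∀ x ∈ LinearMap.ker M.counit, x ∈ W := by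
    have key : (⊤ : Submodule k Q) ≤ W.comap
        ((LinearMap.id : Q →ₗ[k] Q) - (LinearMap.toSpanSingleton k Q M.emp) ∘ₗ M.counit) := by
      rw [← M.span_words]
      refine Submodule.span_le.mpr ?_
      rintro x ⟨w, rfl⟩
      have hrepr : (w.foldr (fun a u => M.cons a u) M.emp) = M.ofWord w := rfl
      simp only [hrepr]
      cases w with
      | nil =>
          simp only [SetLike.mem_coe, Submodule.mem_comap, LinearMap.sub_apply,
            LinearMap.id_apply, LinearMap.comp_apply, LinearMap.toSpanSingleton_apply,
            ofWord_nil, M.counit_emp, one_smul, sub_self]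
          exact W.zero_mem
      | cons a l =>
          simp only [SetLike.mem_coe, Submodule.mem_comap, LinearMap.sub_apply,
            LinearMap.id_apply, LinearMap.comp_apply, LinearMap.toSpanSingleton_apply,
            M.counit_cons, ofWord_cons, zero_smul, sub_zero]
          exact Submodule.subset_span ⟨a, l, rfl⟩
    intro x hx
    have h1 := key (Submodule.mem_top (x := x))
    simp only [Submodule.mem_comap, LinearMap.sub_apply, LinearMap.id_apply,
      LinearMap.comp_apply, LinearMap.toSpanSingleton_apply,
      LinearMap.mem_ker.mp hx, zero_smul, sub_zero] at h1
    exact h1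
  refine ⟨?_, ?_, ?_, ?_⟩
  · -- `j₊` lands in `A₊`
    intro x hx
    have hle : W ≤ (LinearMap.range p).comap jp := by
      refine Submodule.span_le.mpr ?_
      rintro y ⟨a, l, rfl⟩
      simp only [SetLike.mem_coe, Submodule.mem_comap]
      rw [hjp a l]
      exact Submodule.smul_mem _ _ ⟨_, rfl⟩
    exact hle (hker x hx)
  · -- `j₋` lands in `A₋`
    intro x hx
    have hle : W ≤ (LinearMap.range ((LinearMap.id : A →ₗ[k] A) - p)).comap jm := by
      refine Submodule.span_le.mpr ?_
      rintro y ⟨a, l, rfl⟩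
      simp only [SetLike.mem_coe, Submodule.mem_comap]
      rw [hjm a l]
      exact Submodule.smul_mem _ _ ⟨_, rfl⟩
    exact hle (hker x hx)
  · -- `j₋ * j = j₊`
    apply LinearMap.ext_on M.span_words
    rintro x ⟨w, rfl⟩
    have hrepr : (w.foldr (fun a u => M.cons a u) M.emp) = M.ofWord w := rfl
    simp only [hrepr]
    rcases w.eq_nil_or_concat' with rfl | ⟨l, a, rfl⟩
    · rw [ofWord_nil, conv_emp, hjm1, hj.1, hjp1, one_mul]
    · rw [convL M j hj l jm a, jm_ofWord, jm_ofWord, jp_ofWord, jmW_snoc, jpW_snoc]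
      simp only [LinearMap.sub_apply, LinearMap.id_apply]
      abel
  · -- characters in the commutative case
    intro hc
    have mainp : ∀ x y : List A,
        jp (M.mul (M.ofWord x) (M.ofWord y)) = jp (M.ofWord x) * jp (M.ofWord y) := by
      intro x y
      rw [mul_ofWord M (x.length + y.length) x y le_rfl, map_list_sum jp, List.map_map]
      have hmc : List.map (⇑jp ∘ M.ofWord) (qsh x y) = List.map (jpW p) (qsh x y) :=
        List.map_congr_left (fun w _ => jp_ofWord w)
      rw [hmc, jp_char p hc hRB x y, jp_ofWord, jp_ofWord]
    have mainm : ∀ x y : List A,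
        jm (M.mul (M.ofWord x) (M.ofWord y)) = jm (M.ofWord x) * jm (M.ofWord y) := by
      intro x y
      rw [mul_ofWord M (x.length + y.length) x y le_rfl, map_list_sum jm, List.map_map]
      have hmc : List.map (⇑jm ∘ M.ofWord) (qsh x y) = List.map (jmW p) (qsh x y) :=
        List.map_congr_left (fun w _ => jm_ofWord w)
      rw [hmc, jm_char p hc hRB (x.length + y.length) x y le_rfl, jm_ofWord, jm_ofWord]
    constructor
    · intro u v
      have hext : M.mul.compr₂ jp = ((LinearMap.mul k A).compl₂ jp) ∘ₗ jp := by
        apply LinearMap.ext_on M.span_words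
        rintro x ⟨wx, rfl⟩
        apply LinearMap.ext_on M.span_words
        rintro y ⟨wy, rfl⟩
        have hrx : (wx.foldr (fun a u => M.cons a u) M.emp) = M.ofWord wx := rfl
        have hry : (wy.foldr (fun a u => M.cons a u) M.emp) = M.ofWord wy := rfl
        simpa [hrx, hry, LinearMap.compr₂_apply, LinearMap.compl₂_apply,
          LinearMap.comp_apply, LinearMap.mul_apply'] using mainp wx wy
      have h2 := LinearMap.congr_fun (LinearMap.congr_fun hext u) v
      simpa [LinearMap.compr₂_apply, LinearMap.compl₂_apply, LinearMap.comp_apply,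
        LinearMap.mul_apply'] using h2
    · intro u v
      have hext : M.mul.compr₂ jm = ((LinearMap.mul k A).compl₂ jm) ∘ₗ jm := by
        apply LinearMap.ext_on M.span_words
        rintro x ⟨wx, rfl⟩
        apply LinearMap.ext_on M.span_words
        rintro y ⟨wy, rfl⟩
        have hrx : (wx.foldr (fun a u => M.cons a u) M.emp) = M.ofWord wx := rfl
        have hry : (wy.foldr (fun a u => M.cons a u) M.emp) = M.ofWord wy := rfl
        simpa [hrx, hry, LinearMap.compr₂_apply, LinearMap.compl₂_apply,
          LinearMap.comp_apply, LinearMap.mul_apply'] using mainm wx wy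
      have h2 := LinearMap.congr_fun (LinearMap.congr_fun hext u) v
      simpa [LinearMap.compr₂_apply, LinearMap.compl₂_apply, LinearMap.comp_apply,
        LinearMap.mul_apply'] using h2
end
end

section
/- Let A be a unital associative k-algebra. The operation f ⊙ g := f ∘ QSh(g) ∘ ι on U(QSh(A), A), where QSh(g) : QSh(QSh⁺(A)) → QSh(A) sends a word 𝐚¹ ⊗ … ⊗ 𝐚ʳ of nonempty words of QSh(A) to the word g(𝐚¹)…g(𝐚ʳ) and ι : QSh(A) → QSh(QSh⁺(A)) is the sum of iterated reduced deconcatenation coproducts, makes U(QSh(A), A) an associative monoid (the universal semigroup of A) whose two-sided unit is the map j: f ⊙ j = f and j ⊙ f = f for all f ∈ U(QSh(A), A). This product corresponds, under the bijection U(QSh(A), A) ≅ Hom_{Coalg}(QSh(A), QSh(A)) given by f ↦ QSh(f) ∘ ι, to composition of coalgebra endomorphisms of QSh(A). -/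
open scoped TensorProduct
open TensorProduct

noncomputable section

namespace QShPaper
namespace Aux

open QShModel

variable {k : Type*} [Field k]
variable {A Q : Type*} [Ring A] [Algebra k A] [AddCommGroup Q] [Module k Q]
variable (M : QShModel k A Q)

@[simp] lemma ofWord_nil : M.ofWord ([] : List A) = M.emp := rfl

@[simp] lemma ofWord_cons (a : A) (w : List A) :
    M.ofWord (a :: w) = M.cons a (M.ofWord w) := rfl

/-- Two linear maps agreeing on all words agree. -/
lemma ext_words {B : Type*} [AddCommGroup B] [Module k B] {f g : Q →ₗ[k] B}
    (h : ∀ w : List A, f (M.ofWord w) = g (M.ofWord w)) : f = g := by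
  apply LinearMap.ext
  intro x
  have hx : x ∈ Submodule.span k
      (Set.range fun w : List A => w.foldr (fun a u => M.cons a u) M.emp) := by
    rw [M.span_words]; trivial
  induction hx using Submodule.span_induction with
  | mem x hx => obtain ⟨w, rfl⟩ := hx; exact h w
  | zero => simp
  | add x y _ _ hx hy => simp [hx, hy]
  | smul c x _ hx => simp [hx]

lemma counit_ofWord {w : List A} (hw : w ≠ []) : M.counit (M.ofWord w) = 0 := by
  cases w with
  | nil => exact absurd rfl hw
  | cons a v => simpa using M.counit_cons a (M.ofWord v)

lemma ofWord_mem_ker {w : List A} (hw : w ≠ []) :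
    M.ofWord w ∈ LinearMap.ker M.counit := by
  simp [LinearMap.mem_ker, counit_ofWord M hw]

lemma comul_ofWord (w : List A) :
    M.comul (M.ofWord w) =
      ∑ s ∈ Finset.range (w.length + 1),
        M.ofWord (w.take s) ⊗ₜ[k] M.ofWord (w.drop s) := by
  induction w with
  | nil => simpa using M.comul_emp
  | cons a v ih =>
      rw [ofWord_cons, M.comul_cons a (M.ofWord v), ih, map_sum, List.length_cons]
      conv_rhs => rw [Finset.sum_range_succ']
      simp only [TensorProduct.map_tmul, LinearMap.id_coe, id_eq, List.take_succ_cons,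
        List.drop_succ_cons, ofWord_cons, List.take_zero, List.drop_zero, ofWord_nil]
      exact add_comm _ _

lemma redComul_ofWord {w : List A} (hw : w ≠ []) :
    redComul k M.emp M.comul (M.ofWord w) =
      ∑ s ∈ Finset.Ico 1 w.length,
        M.ofWord (w.take s) ⊗ₜ[k] M.ofWord (w.drop s) := by
  have hlen : 1 ≤ w.length := List.length_pos_iff.mpr hw
  have h1 : M.comul (M.ofWord w) =
      M.emp ⊗ₜ[k] M.ofWord w +
        ((∑ s ∈ Finset.Ico 1 w.length,
          M.ofWord (w.take s) ⊗ₜ[k] M.ofWord (w.drop s)) + M.ofWord w ⊗ₜ[k] M.emp) := by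
    rw [comul_ofWord]
    rw [show w.length + 1 = w.length + 1 from rfl]
    rw [Finset.range_eq_Ico, ← Finset.sum_Ico_consecutive _ (Nat.zero_le 1) (by omega : 1 ≤ w.length + 1)]
    rw [Finset.sum_Ico_succ_top hlen]
    simp [List.take_length, List.drop_length]
  simp only [redComul, LinearMap.sub_apply, h1, LinearMap.flip_apply,
    TensorProduct.mk_apply]
  abel

lemma redIter_succ {one : Q} {com : Q →ₗ[k] Q ⊗[k] Q} (n : ℕ) (h : Q) :
    redIter k one com (n+1) h =
      (TensorPower.cast k Q (show 1 + (n+1) = n+1+1 by omega))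
        ((TensorPower.mulEquiv (R := k) (M := Q) (n := 1) (m := n+1))
          ((TensorProduct.map (toPow1 k).toLinearMap (redIter k one com n))
            (redComul k one com h))) := rfl

lemma redIter_ofWord_eq_zero (i : ℕ) :
    ∀ w : List A, w ≠ [] → w.length ≤ i →
      redIter k M.emp M.comul i (M.ofWord w) = 0 := by
  induction i with
  | zero =>
      intro w hw hlen
      exact absurd (List.length_eq_zero_iff.mp (Nat.le_zero.mp hlen)) hw
  | succ i ih =>
      intro w hw hlen
      rw [redIter_succ, redComul_ofWord M hw, map_sum]
      rw [show (∑ s ∈ Finset.Ico 1 w.length,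
          (TensorProduct.map (toPow1 k).toLinearMap (redIter k M.emp M.comul i))
            (M.ofWord (w.take s) ⊗ₜ[k] M.ofWord (w.drop s))) = 0 from ?_]
      · simp
      · apply Finset.sum_eq_zero
        intro s hs
        rw [Finset.mem_Ico] at hs
        have hdrop_ne : w.drop s ≠ [] := by
          intro hnil
          have := List.drop_eq_nil_iff.mp hnil
          omega
        have hdlen : (w.drop s).length ≤ i := by
          rw [List.length_drop]; omega
        rw [TensorProduct.map_tmul, ih (w.drop s) hdrop_ne hdlen, TensorProduct.tmul_zero]

lemma sub_counit_smul_mem (x : Q) :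
    x - M.counit x • M.emp ∈
      Submodule.span k {y : Q | ∃ w : List A, w ≠ [] ∧ M.ofWord w = y} := by
  have hx : x ∈ Submodule.span k
      (Set.range fun w : List A => w.foldr (fun a u => M.cons a u) M.emp) := by
    rw [M.span_words]; trivial
  induction hx using Submodule.span_induction with
  | mem x hx =>
      obtain ⟨w, rfl⟩ := hx
      cases w with
      | nil =>
          simp only [List.foldr_nil, M.counit_emp, one_smul, sub_self]
          exact Submodule.zero_mem _
      | cons a v =>
          have : M.counit ((a :: v).foldr (fun a u => M.cons a u) M.emp) = 0 :=
            counit_ofWord M (by simp)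
          rw [this, zero_smul, sub_zero]
          exact Submodule.subset_span ⟨a :: v, by simp, rfl⟩
  | zero => simp
  | add x y _ _ hx hy =>
      have : x + y - M.counit (x + y) • M.emp
          = (x - M.counit x • M.emp) + (y - M.counit y • M.emp) := by
        rw [map_add, add_smul]; abel
      rw [this]; exact Submodule.add_mem _ hx hy
  | smul c x _ hx =>
      have : c • x - M.counit (c • x) • M.emp = c • (x - M.counit x • M.emp) := by
        rw [map_smul, smul_sub, smul_smul, smul_eq_mul]
      rw [this]; exact Submodule.smul_mem _ _ hx

lemma conil (h : Q) (hh : h ∈ LinearMap.ker M.counit) :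
    ∃ N, ∀ i, N ≤ i → redIter k M.emp M.comul i h = 0 := by
  have hmem : h ∈ Submodule.span k {y : Q | ∃ w : List A, w ≠ [] ∧ M.ofWord w = y} := by
    have := sub_counit_smul_mem M h
    rwa [LinearMap.mem_ker.mp hh, zero_smul, sub_zero] at this
  clear hh
  induction hmem using Submodule.span_induction with
  | mem x hx =>
      obtain ⟨w, hw, rfl⟩ := hx
      exact ⟨w.length, fun i hi => redIter_ofWord_eq_zero M i w hw hi⟩
  | zero => exact ⟨0, fun i _ => by simp⟩
  | add x y _ _ hx hy =>
      obtain ⟨N₁, h₁⟩ := hx; obtain ⟨N₂, h₂⟩ := hy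
      exact ⟨max N₁ N₂, fun i hi => by
        rw [map_add, h₁ i (le_trans (le_max_left _ _) hi),
          h₂ i (le_trans (le_max_right _ _) hi), add_zero]⟩
  | smul c x _ hx =>
      obtain ⟨N, hN⟩ := hx
      exact ⟨N, fun i hi => by rw [map_smul, hN i hi, smul_zero]⟩

lemma toPow1_symm_comp :
    (toPow1 k (Q := Q)).symm.toLinearMap ∘ₗ (toPow1 k (Q := Q)).toLinearMap
      = LinearMap.id := by
  ext q; simp

lemma wordMap_zero_redIter_zero (c : Q →ₗ[k] A) (h : Q) :
    M.wordMap c 0 (redIter k M.emp M.comul 0 h) = M.cons (c h) M.emp := by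
  show (((M.cons ∘ₗ c).flip M.emp) ∘ₗ (toPow1 k).symm.toLinearMap) ((toPow1 k) h)
    = M.cons (c h) M.emp
  simp

lemma wordMap_succ_redIter_succ (c : Q →ₗ[k] A) (n : ℕ) (x : Q) :
    M.wordMap c (n+1) (redIter k M.emp M.comul (n+1) x) =
      TensorProduct.lift (M.cons ∘ₗ c)
        ((TensorProduct.map LinearMap.id
            (M.wordMap c n ∘ₗ redIter k M.emp M.comul n))
          (redComul k M.emp M.comul x)) := by
  rw [redIter_succ]
  show TensorProduct.lift (M.cons ∘ₗ c)
      ((TensorProduct.map (toPow1 k).symm.toLinearMap (M.wordMap c n))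
        ((TensorPower.mulEquiv (R := k) (M := Q) (n := 1) (m := n+1)).symm
          ((TensorPower.cast k Q (show n+1+1 = 1+(n+1) by omega))
            ((TensorPower.cast k Q (show 1 + (n+1) = n+1+1 by omega))
              ((TensorPower.mulEquiv (R := k) (M := Q) (n := 1) (m := n+1))
                ((TensorProduct.map (toPow1 k).toLinearMap
                  (redIter k M.emp M.comul n))
                  (redComul k M.emp M.comul x))))))) = _
  rw [TensorPower.cast_cast, TensorPower.cast_refl, LinearEquiv.refl_apply,
    LinearEquiv.symm_apply_apply]
  have hmap : ∀ y : Q ⊗[k] Q,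
      (TensorProduct.map (toPow1 k (Q := Q)).symm.toLinearMap (M.wordMap c n))
        ((TensorProduct.map (toPow1 k).toLinearMap (redIter k M.emp M.comul n)) y)
      = (TensorProduct.map LinearMap.id
          (M.wordMap c n ∘ₗ redIter k M.emp M.comul n)) y := by
    intro y
    rw [← LinearMap.comp_apply, ← TensorProduct.map_comp, toPow1_symm_comp]
  rw [hmap]

lemma sum_range_stab {B : Type*} [AddCommGroup B] {F : ℕ → B} {N : ℕ}
    (hF : ∀ i, N ≤ i → F i = 0) {n : ℕ} (hn : N ≤ n) :
    ∑ i ∈ Finset.range (n+1), F i = ∑ i ∈ Finset.range (N+1), F i := by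
  refine (Finset.sum_subset ?_ ?_).symm
  · intro i hi; rw [Finset.mem_range] at *; omega
  · intro i hi hni
    rw [Finset.mem_range] at *
    exact hF i (by omega)

lemma hterm_sum (c : Q →ₗ[k] A) {w : List A} (hw : w ≠ []) (i : ℕ) :
    M.wordMap c (i+1) (redIter k M.emp M.comul (i+1) (M.ofWord w)) =
      ∑ s ∈ Finset.Ico 1 w.length,
        M.cons (c (M.ofWord (w.take s)))
          (M.wordMap c i (redIter k M.emp M.comul i (M.ofWord (w.drop s)))) := by
  rw [wordMap_succ_redIter_succ, redComul_ofWord M hw, map_sum, map_sum]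
  refine Finset.sum_congr rfl fun s hs => ?_
  simp

/-- The fundamental recursion for `Φ = QSh(g) ∘ ι` on nonempty words. -/
lemma phi_word {g : Q →ₗ[k] A} {Φ : Q →ₗ[k] Q}
    (hΦ : M.IotaComp M.emp M.comul M.counit g Φ) {w : List A} (hw : w ≠ []) :
    Φ (M.ofWord w) = M.cons (g (M.ofWord w)) M.emp +
      ∑ s ∈ Finset.Ico 1 w.length,
        M.cons (g (M.ofWord (w.take s))) (Φ (M.ofWord (w.drop s))) := by
  obtain ⟨N₀, hN₀⟩ := hΦ.2 (M.ofWord w) (ofWord_mem_ker M hw)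
  have hex : ∀ s ∈ Finset.Ico 1 w.length, ∃ Ns, ∀ n ≥ Ns,
      Φ (M.ofWord (w.drop s)) = ∑ i ∈ Finset.range (n+1),
        M.wordMap g i (redIter k M.emp M.comul i (M.ofWord (w.drop s))) := by
    intro s hs
    rw [Finset.mem_Ico] at hs
    exact hΦ.2 _ (ofWord_mem_ker M (by
      intro hnil; have := List.drop_eq_nil_iff.mp hnil; omega))
  choose Ns hNs using hex
  set B := (Finset.Ico 1 w.length).attach.sup (fun s => Ns s.1 s.2) with hB
  set n := max N₀ (B + 1) with hn
  have hnB : B + 1 ≤ n := le_max_right _ _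
  obtain ⟨n', hn'⟩ : ∃ n', n = n' + 1 := ⟨n - 1, by omega⟩
  have h1 : Φ (M.ofWord w) = ∑ i ∈ Finset.range (n+1),
      M.wordMap g i (redIter k M.emp M.comul i (M.ofWord w)) :=
    hN₀ n (le_max_left _ _)
  rw [h1, Finset.sum_range_succ']
  rw [Finset.sum_congr rfl (fun i _ => hterm_sum M g hw i), Finset.sum_comm]
  rw [wordMap_zero_redIter_zero]
  rw [add_comm]
  congr 1
  refine Finset.sum_congr rfl fun s hs => ?_
  rw [← map_sum]
  congr 1
  have hBs : Ns s hs ≤ B :=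
    Finset.le_sup (f := fun t : {x // x ∈ Finset.Ico 1 w.length} => Ns t.1 t.2)
      (Finset.mem_attach _ ⟨s, hs⟩)
  rw [hn']
  exact (hNs s hs n' (by omega)).symm

lemma j_single {j : Q →ₗ[k] A} (hj : M.IsJ j) (a : A) :
    j (M.ofWord [a]) = a := hj.2.1 a

lemma j_long {j : Q →ₗ[k] A} (hj : M.IsJ j) {w : List A} (hw : 2 ≤ w.length) :
    j (M.ofWord w) = 0 := by
  match w with
  | a :: b :: t => exact hj.2.2 a b (M.ofWord t)

/-- `Σ_i wordMap j i ∘ redIter i = id` on nonempty words. -/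
lemma id_sum_word {j : Q →ₗ[k] A} (hj : M.IsJ j) :
    ∀ n, ∀ w : List A, w ≠ [] → w.length ≤ n →
      M.ofWord w = ∑ i ∈ Finset.range (n+1),
        M.wordMap j i (redIter k M.emp M.comul i (M.ofWord w)) := by
  intro n
  induction n with
  | zero =>
      intro w hw hlen
      exact absurd (List.length_eq_zero_iff.mp (Nat.le_zero.mp hlen)) hw
  | succ n ih =>
      intro w hw hlen
      rw [Finset.sum_range_succ']
      rw [Finset.sum_congr rfl (fun i _ => hterm_sum M j hw i), Finset.sum_comm]
      rw [wordMap_zero_redIter_zero]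
      have hdrop : ∀ s ∈ Finset.Ico 1 w.length,
          ∑ i ∈ Finset.range (n+1),
            M.wordMap j i (redIter k M.emp M.comul i (M.ofWord (w.drop s)))
          = M.ofWord (w.drop s) := by
        intro s hs
        rw [Finset.mem_Ico] at hs
        refine (ih (w.drop s) ?_ ?_).symm
        · intro hnil; have := List.drop_eq_nil_iff.mp hnil; omega
        · rw [List.length_drop]; omega
      have hsum : ∀ s ∈ Finset.Ico 1 w.length,
          (∑ i ∈ Finset.range (n+1), M.cons (j (M.ofWord (w.take s)))
            (M.wordMap j i (redIter k M.emp M.comul i (M.ofWord (w.drop s)))))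
          = M.cons (j (M.ofWord (w.take s))) (M.ofWord (w.drop s)) := by
        intro s hs
        rw [← map_sum, hdrop s hs]
      rw [Finset.sum_congr rfl hsum]
      obtain ⟨a, v, rfl⟩ : ∃ a v, w = a :: v := by
        cases w with
        | nil => exact absurd rfl hw
        | cons a v => exact ⟨a, v, rfl⟩
      by_cases hv : v = []
      · subst hv
        simp [hj.2.1 a]
      · have hvlen : 1 ≤ v.length := List.length_pos_iff.mpr hv
        have hjw : j (M.ofWord (a :: v)) = 0 := j_long M hj (by simp; omega)
        rw [hjw, map_zero, LinearMap.zero_apply, add_zero]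
        rw [Finset.sum_eq_single_of_mem 1 (by rw [Finset.mem_Ico]; constructor <;> simp <;> omega)]
        · show M.cons a (M.ofWord v) = M.cons (j (M.cons a M.emp)) (M.ofWord v)
          rw [hj.2.1 a]
        · intro s hs hs1
          rw [Finset.mem_Ico] at hs
          have : j (M.ofWord ((a :: v).take s)) = 0 := by
            refine j_long M hj ?_
            rw [List.length_take]
            simp only [List.length_cons]
            omega
          rw [this, map_zero, LinearMap.zero_apply]

/-- `Σ_i wordMap j i ∘ redIter i = id` on the kernel of the counit. -/
lemma id_sum {j : Q →ₗ[k] A} (hj : M.IsJ j) (h : Q)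
    (hh : h ∈ LinearMap.ker M.counit) :
    ∃ N, ∀ n ≥ N, h = ∑ i ∈ Finset.range (n+1),
      M.wordMap j i (redIter k M.emp M.comul i h) := by
  have hmem : h ∈ Submodule.span k {y : Q | ∃ w : List A, w ≠ [] ∧ M.ofWord w = y} := by
    have := sub_counit_smul_mem M h
    rwa [LinearMap.mem_ker.mp hh, zero_smul, sub_zero] at this
  clear hh
  induction hmem using Submodule.span_induction with
  | mem x hx =>
      obtain ⟨w, hw, rfl⟩ := hx
      exact ⟨w.length, fun n hn => id_sum_word M hj n w hw hn⟩
  | zero => exact ⟨0, fun n _ => by simp⟩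
  | add x y _ _ hx hy =>
      obtain ⟨N₁, h₁⟩ := hx; obtain ⟨N₂, h₂⟩ := hy
      refine ⟨max N₁ N₂, fun n hn => ?_⟩
      have e₁ := h₁ n (le_trans (le_max_left _ _) hn)
      have e₂ := h₂ n (le_trans (le_max_right _ _) hn)
      have hsplit : ∑ i ∈ Finset.range (n+1),
          M.wordMap j i (redIter k M.emp M.comul i (x + y))
          = (∑ i ∈ Finset.range (n+1), M.wordMap j i (redIter k M.emp M.comul i x))
            + ∑ i ∈ Finset.range (n+1), M.wordMap j i (redIter k M.emp M.comul i y) := by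
        rw [← Finset.sum_add_distrib]
        exact Finset.sum_congr rfl fun i _ => by rw [map_add, map_add]
      rw [hsplit, ← e₁, ← e₂]
  | smul c x _ hx =>
      obtain ⟨N, hN⟩ := hx
      refine ⟨N, fun n hn => ?_⟩
      calc c • x = c • ∑ i ∈ Finset.range (n+1),
            M.wordMap j i (redIter k M.emp M.comul i x) := by rw [← hN n hn]
        _ = _ := by
          rw [Finset.smul_sum]
          refine Finset.sum_congr rfl fun i _ => ?_
          rw [map_smul, map_smul]

/-- Uniqueness of `Φ` with `Φ = QSh(g) ∘ ι`. -/
lemma iota_unique {g : Q →ₗ[k] A} {Φ₁ Φ₂ : Q →ₗ[k] Q}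
    (h₁ : M.IotaComp M.emp M.comul M.counit g Φ₁)
    (h₂ : M.IotaComp M.emp M.comul M.counit g Φ₂) : Φ₁ = Φ₂ := by
  refine ext_words M fun w => ?_
  cases w with
  | nil => rw [ofWord_nil, h₁.1, h₂.1]
  | cons a v =>
      obtain ⟨N₁, hN₁⟩ := h₁.2 (M.ofWord (a :: v)) (ofWord_mem_ker M (by simp))
      obtain ⟨N₂, hN₂⟩ := h₂.2 (M.ofWord (a :: v)) (ofWord_mem_ker M (by simp))
      rw [hN₁ (max N₁ N₂) (le_max_left _ _), hN₂ (max N₁ N₂) (le_max_right _ _)]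

lemma counit_comp {g : Q →ₗ[k] A} {Φ : Q →ₗ[k] Q}
    (hΦ : M.IotaComp M.emp M.comul M.counit g Φ) :
    M.counit ∘ₗ Φ = M.counit := by
  refine ext_words M fun w => ?_
  cases w with
  | nil => rw [LinearMap.comp_apply, ofWord_nil, hΦ.1]
  | cons a v =>
      rw [LinearMap.comp_apply, phi_word M hΦ (List.cons_ne_nil a v),
        map_add, map_sum]
      simp [M.counit_cons, counit_ofWord M (List.cons_ne_nil a v)]

lemma cons_mem_range (a : A) (x : Q) :
    M.cons a x ∈ LinearMap.range (TensorProduct.lift M.cons) :=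
  ⟨a ⊗ₜ[k] x, TensorProduct.lift.tmul a x⟩

lemma phi_word_mem {g : Q →ₗ[k] A} {Φ : Q →ₗ[k] Q}
    (hΦ : M.IotaComp M.emp M.comul M.counit g Φ) {w : List A} (hw : w ≠ []) :
    Φ (M.ofWord w) ∈ LinearMap.range (TensorProduct.lift M.cons) := by
  rw [phi_word M hΦ hw]
  exact Submodule.add_mem _ (cons_mem_range M _ _)
    (Submodule.sum_mem _ fun s _ => cons_mem_range M _ _)

lemma j_cons_range {j : Q →ₗ[k] A} (hj : M.IsJ j) (a : A) {x : Q}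
    (hx : x ∈ LinearMap.range (TensorProduct.lift M.cons)) :
    j (M.cons a x) = 0 := by
  obtain ⟨t, rfl⟩ := hx
  induction t using TensorProduct.induction_on with
  | zero => simp
  | tmul b u => rw [TensorProduct.lift.tmul]; exact hj.2.2 a b u
  | add t₁ t₂ h₁ h₂ => rw [map_add, map_add, map_add, h₁, h₂, add_zero]

lemma j_comp {g : Q →ₗ[k] A} {Φ : Q →ₗ[k] Q} {j : Q →ₗ[k] A} (hj : M.IsJ j)
    (hg : g M.emp = 1) (hΦ : M.IotaComp M.emp M.comul M.counit g Φ) :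
    j ∘ₗ Φ = g := by
  refine ext_words M fun w => ?_
  cases w with
  | nil => rw [LinearMap.comp_apply, ofWord_nil, hΦ.1, hj.1, hg]
  | cons a v =>
      rw [LinearMap.comp_apply, phi_word M hΦ (List.cons_ne_nil a v), map_add, map_sum]
      have hz : ∀ s ∈ Finset.Ico 1 (a :: v).length,
          j (M.cons (g (M.ofWord ((a :: v).take s))) (Φ (M.ofWord ((a :: v).drop s)))) = 0 := by
        intro s hs
        rw [Finset.mem_Ico] at hs
        refine j_cons_range M hj _ (phi_word_mem M hΦ ?_)
        intro hnil; have := List.drop_eq_nil_iff.mp hnil; omega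
      rw [Finset.sum_congr rfl hz, Finset.sum_const_zero, add_zero, hj.2.1]

lemma comul_comp_word {g : Q →ₗ[k] A} {Φ : Q →ₗ[k] Q}
    (hΦ : M.IotaComp M.emp M.comul M.counit g Φ) {w : List A} (hw : w ≠ [])
    (ih : ∀ v : List A, v.length < w.length →
      M.comul (Φ (M.ofWord v)) = TensorProduct.map Φ Φ (M.comul (M.ofWord v))) :
    M.comul (Φ (M.ofWord w)) = TensorProduct.map Φ Φ (M.comul (M.ofWord w)) := by
  have hm : 1 ≤ w.length := List.length_pos_iff.mpr hw
  set G : ℕ → ℕ → Q ⊗[k] Q := fun s u =>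
    M.cons (g (M.ofWord (w.take s))) (Φ (M.ofWord ((w.take u).drop s)))
      ⊗ₜ[k] Φ (M.ofWord (w.drop u)) with hG
  -- Step 1 : expand the left-hand side via the recursion for `Φ`
  have e1 : M.comul (Φ (M.ofWord w)) =
      M.emp ⊗ₜ[k] Φ (M.ofWord w)
        + (M.cons (g (M.ofWord w)) M.emp ⊗ₜ[k] M.emp
          + ∑ s ∈ Finset.Ico 1 w.length,
              (TensorProduct.map (M.cons (g (M.ofWord (w.take s)))) LinearMap.id)
                (TensorProduct.map Φ Φ (M.comul (M.ofWord (w.drop s))))) := by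
    rw [phi_word M hΦ hw, map_add, map_sum, M.comul_cons, M.comul_emp,
      TensorProduct.map_tmul]
    have hs1 : ∀ s ∈ Finset.Ico 1 w.length,
        M.comul (M.cons (g (M.ofWord (w.take s))) (Φ (M.ofWord (w.drop s))))
          = M.emp ⊗ₜ[k] M.cons (g (M.ofWord (w.take s))) (Φ (M.ofWord (w.drop s)))
            + (TensorProduct.map (M.cons (g (M.ofWord (w.take s)))) LinearMap.id)
                (TensorProduct.map Φ Φ (M.comul (M.ofWord (w.drop s)))) := by
      intro s hs
      rw [Finset.mem_Ico] at hs
      rw [M.comul_cons, ih (w.drop s) (by rw [List.length_drop]; omega)]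
    rw [Finset.sum_congr rfl hs1, Finset.sum_add_distrib,
      TensorProduct.tmul_add, TensorProduct.tmul_sum]
    simp only [LinearMap.id_coe, id_eq]
    abel
  -- Step 2 : the inner pieces as sums of `G`
  have e2 : ∀ s ∈ Finset.Ico 1 w.length,
      (TensorProduct.map (M.cons (g (M.ofWord (w.take s)))) LinearMap.id)
        (TensorProduct.map Φ Φ (M.comul (M.ofWord (w.drop s))))
      = ∑ u ∈ Finset.Ico s (w.length + 1), G s u := by
    intro s hs
    rw [Finset.mem_Ico] at hs
    rw [comul_ofWord, map_sum, map_sum, Finset.sum_Ico_eq_sum_range]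
    have hlen : w.length + 1 - s = (w.drop s).length + 1 := by
      rw [List.length_drop]; omega
    rw [hlen]
    refine Finset.sum_congr rfl fun t ht => ?_
    rw [Finset.mem_range] at ht
    have h1 : (w.take (s + t)).drop s = (w.drop s).take t := by
      rw [List.drop_take]
      congr 1
      omega
    have h2 : w.drop (s + t) = (w.drop s).drop t := by
      rw [List.drop_drop]
      try (congr 1; omega)
    simp only [TensorProduct.map_tmul, hG, LinearMap.id_coe, id_eq]
    rw [h1, h2]
  -- Step 3 : boundary term
  have e3 : M.cons (g (M.ofWord w)) M.emp ⊗ₜ[k] M.emp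
      = ∑ u ∈ Finset.Ico w.length (w.length + 1), G w.length u := by
    rw [Nat.Ico_succ_singleton, Finset.sum_singleton]
    simp only [hG, List.take_length, List.drop_length, ofWord_nil, hΦ.1]
  -- Step 5 : identify the inner sums with `Φ(take u) ⊗ Φ(drop u)`
  have e5 : ∀ u ∈ Finset.Ico 1 (w.length + 1),
      ∑ s ∈ Finset.Ico 1 (u + 1), G s u
        = Φ (M.ofWord (w.take u)) ⊗ₜ[k] Φ (M.ofWord (w.drop u)) := by
    intro u hu
    rw [Finset.mem_Ico] at hu
    have hu1 : 1 ≤ u := hu.1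
    have hum : u ≤ w.length := by omega
    have hlentu : (w.take u).length = u := by rw [List.length_take]; omega
    have htu : w.take u ≠ [] := by
      intro h0
      rw [h0] at hlentu
      simp at hlentu
      omega
    rw [Finset.sum_Ico_succ_top hu1]
    rw [phi_word M hΦ htu, hlentu, TensorProduct.add_tmul, TensorProduct.sum_tmul]
    rw [add_comm]
    congr 1
    · have hnil : (w.take u).drop u = [] := by
        apply List.drop_eq_nil_of_le
        rw [hlentu]
      simp only [hG, hnil, ofWord_nil, hΦ.1]
    · refine Finset.sum_congr rfl fun s hs => ?_
      rw [Finset.mem_Ico] at hs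
      have hts : (w.take u).take s = w.take s := by
        rw [List.take_take]
        congr 1
        omega
      simp only [hG, hts]
  -- Step 6 : expand the right-hand side
  have e6 : TensorProduct.map Φ Φ (M.comul (M.ofWord w)) =
      M.emp ⊗ₜ[k] Φ (M.ofWord w)
        + ∑ u ∈ Finset.Ico 1 (w.length + 1),
            Φ (M.ofWord (w.take u)) ⊗ₜ[k] Φ (M.ofWord (w.drop u)) := by
    rw [comul_ofWord, map_sum, Finset.range_eq_Ico,
      ← Finset.sum_Ico_consecutive _ (Nat.zero_le 1) (by omega : 1 ≤ w.length + 1),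
      show Finset.Ico 0 1 = {0} from rfl, Finset.sum_singleton]
    simp only [List.take_zero, List.drop_zero, ofWord_nil, TensorProduct.map_tmul, hΦ.1]
  -- Assemble
  rw [e1, Finset.sum_congr rfl e2, e6]
  congr 1
  rw [e3, add_comm (∑ u ∈ Finset.Ico w.length (w.length + 1), G w.length u)
    (∑ s ∈ Finset.Ico 1 w.length, ∑ u ∈ Finset.Ico s (w.length + 1), G s u)]
  rw [← Finset.sum_Ico_succ_top hm (fun s => ∑ u ∈ Finset.Ico s (w.length + 1), G s u)]
  rw [Finset.sum_Ico_Ico_comm]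
  exact Finset.sum_congr rfl e5

lemma comul_comp {g : Q →ₗ[k] A} {Φ : Q →ₗ[k] Q}
    (hΦ : M.IotaComp M.emp M.comul M.counit g Φ) :
    M.comul ∘ₗ Φ = TensorProduct.map Φ Φ ∘ₗ M.comul := by
  have key : ∀ n (w : List A), w.length ≤ n →
      M.comul (Φ (M.ofWord w)) = TensorProduct.map Φ Φ (M.comul (M.ofWord w)) := by
    intro n
    induction n with
    | zero =>
        intro w hwn
        obtain rfl := List.length_eq_zero_iff.mp (Nat.le_zero.mp hwn)
        rw [ofWord_nil, hΦ.1, M.comul_emp, TensorProduct.map_tmul, hΦ.1]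
    | succ n ih =>
        intro w hwn
        rcases eq_or_ne w [] with rfl | hw
        · rw [ofWord_nil, hΦ.1, M.comul_emp, TensorProduct.map_tmul, hΦ.1]
        · exact comul_comp_word M hΦ hw fun v hv => ih v (by omega)
  exact ext_words M fun w => key w.length w le_rfl

lemma exists_dual {V : Type*} [AddCommGroup V] [Module k V] {x : V} (hx : x ≠ 0) :
    ∃ f : V →ₗ[k] k, f x = 1 := by
  obtain ⟨g, hg⟩ := (LinearMap.toSpanSingleton k V x).exists_leftInverse_of_injective
    (LinearMap.ker_toSpanSingleton (R := k) (M := V) hx)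
  refine ⟨g, ?_⟩
  have := LinearMap.congr_fun hg 1
  rwa [LinearMap.comp_apply, LinearMap.toSpanSingleton_apply, one_smul,
    LinearMap.id_apply] at this

lemma right_zero_of_tmul_eq_zero {V W : Type*} [AddCommGroup V] [Module k V]
    [AddCommGroup W] [Module k W] {u : V} {v : W}
    (h : u ⊗ₜ[k] v = 0) (hu : u ≠ 0) : v = 0 := by
  obtain ⟨f, hf⟩ := exists_dual (k := k) hu
  have : (TensorProduct.lid k W) ((TensorProduct.map f LinearMap.id) (u ⊗ₜ[k] v)) = v := by
    rw [TensorProduct.map_tmul, hf, LinearMap.id_coe, id_eq, TensorProduct.lid_tmul, one_smul]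
  rw [h, map_zero, map_zero] at this
  exact this.symm

lemma psi_emp {Ψ : Q →ₗ[k] Q} (hcu : M.counit ∘ₗ Ψ = M.counit)
    (hcm : M.comul ∘ₗ Ψ = TensorProduct.map Ψ Ψ ∘ₗ M.comul) : Ψ M.emp = M.emp := by
  set y := Ψ M.emp - M.emp with hy
  have hyk : y ∈ LinearMap.ker M.counit := by
    have h1 : M.counit (Ψ M.emp) = 1 := by
      have := LinearMap.congr_fun hcu M.emp
      rw [LinearMap.comp_apply] at this
      rw [this, M.counit_emp]
    rw [LinearMap.mem_ker, hy, map_sub, h1, M.counit_emp, sub_self]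
  have hcomulPsi : M.comul (Ψ M.emp) = Ψ M.emp ⊗ₜ[k] Ψ M.emp := by
    have := LinearMap.congr_fun hcm M.emp
    rw [LinearMap.comp_apply, LinearMap.comp_apply, M.comul_emp,
      TensorProduct.map_tmul] at this
    exact this
  have hred : redComul k M.emp M.comul y = y ⊗ₜ[k] y := by
    simp only [redComul, LinearMap.sub_apply, TensorProduct.mk_apply,
      LinearMap.flip_apply, hy, map_sub, hcomulPsi, M.comul_emp,
      TensorProduct.sub_tmul, TensorProduct.tmul_sub]
    abel
  have hz : ∀ n, redIter k M.emp M.comul n y = 0 → y = 0 := by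
    intro n
    induction n with
    | zero =>
        intro h0
        exact (LinearEquiv.map_eq_zero_iff _).mp h0
    | succ n ih =>
        intro h0
        rw [redIter_succ, hred, TensorProduct.map_tmul,
          LinearEquiv.map_eq_zero_iff, LinearEquiv.map_eq_zero_iff] at h0
        by_cases hy0 : y = 0
        · exact hy0
        · have h1 : (toPow1 k) y ≠ 0 := fun hh =>
            hy0 ((LinearEquiv.map_eq_zero_iff _).mp hh)
          exact ih (right_zero_of_tmul_eq_zero h0 h1)
  obtain ⟨N, hN⟩ := conil M y hyk
  have := hz N (hN N le_rfl)
  rw [hy] at this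
  exact sub_eq_zero.mp this

lemma psi_redComul {Ψ : Q →ₗ[k] Q}
    (hcm : M.comul ∘ₗ Ψ = TensorProduct.map Ψ Ψ ∘ₗ M.comul)
    (hemp : Ψ M.emp = M.emp) (x : Q) :
    redComul k M.emp M.comul (Ψ x) =
      TensorProduct.map Ψ Ψ (redComul k M.emp M.comul x) := by
  have h1 : M.comul (Ψ x) = TensorProduct.map Ψ Ψ (M.comul x) := by
    have := LinearMap.congr_fun hcm x
    rw [LinearMap.comp_apply, LinearMap.comp_apply] at this
    exact this
  simp only [redComul, LinearMap.sub_apply, TensorProduct.mk_apply,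
    LinearMap.flip_apply, h1, map_sub, TensorProduct.map_tmul, hemp]

lemma wordMap_redIter_psi {Ψ : Q →ₗ[k] Q}
    (hcm : M.comul ∘ₗ Ψ = TensorProduct.map Ψ Ψ ∘ₗ M.comul)
    (hemp : Ψ M.emp = M.emp) :
    ∀ (i : ℕ) (c : Q →ₗ[k] A) (x : Q),
      M.wordMap c i (redIter k M.emp M.comul i (Ψ x)) =
        M.wordMap (c ∘ₗ Ψ) i (redIter k M.emp M.comul i x) := by
  intro i
  induction i with
  | zero =>
      intro c x
      rw [wordMap_zero_redIter_zero, wordMap_zero_redIter_zero, LinearMap.comp_apply]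
  | succ i ih =>
      intro c x
      rw [wordMap_succ_redIter_succ, wordMap_succ_redIter_succ,
        psi_redComul M hcm hemp x]
      set r := redComul k M.emp M.comul x with hr
      have hWc : (M.wordMap c i ∘ₗ redIter k M.emp M.comul i) ∘ₗ Ψ
          = M.wordMap (c ∘ₗ Ψ) i ∘ₗ redIter k M.emp M.comul i := by
        apply LinearMap.ext
        intro z
        simp only [LinearMap.comp_apply]
        exact ih c z
      have h1 : (TensorProduct.map LinearMap.id
            (M.wordMap c i ∘ₗ redIter k M.emp M.comul i))
          ((TensorProduct.map Ψ Ψ) r)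
          = (TensorProduct.map Ψ LinearMap.id)
              ((TensorProduct.map LinearMap.id
                (M.wordMap (c ∘ₗ Ψ) i ∘ₗ redIter k M.emp M.comul i)) r) := by
        rw [← LinearMap.comp_apply, ← TensorProduct.map_comp]
        rw [← LinearMap.comp_apply (TensorProduct.map Ψ LinearMap.id),
          ← TensorProduct.map_comp]
        rw [LinearMap.id_comp, LinearMap.id_comp, LinearMap.comp_id, hWc]
      rw [h1, ← LinearMap.comp_apply (TensorProduct.lift (M.cons ∘ₗ c))]
      congr 1
      apply TensorProduct.ext'
      intro a b
      simp

lemma part2 {j : Q →ₗ[k] A} (hj : M.IsJ j) {Ψ : Q →ₗ[k] Q}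
    (hcu : M.counit ∘ₗ Ψ = M.counit)
    (hcm : M.comul ∘ₗ Ψ = TensorProduct.map Ψ Ψ ∘ₗ M.comul) :
    M.IotaComp M.emp M.comul M.counit (j ∘ₗ Ψ) Ψ := by
  have hemp := psi_emp M hcu hcm
  refine ⟨hemp, fun h hh => ?_⟩
  have hPsih : Ψ h ∈ LinearMap.ker M.counit := by
    rw [LinearMap.mem_ker]
    have := LinearMap.congr_fun hcu h
    rw [LinearMap.comp_apply] at this
    rw [this, LinearMap.mem_ker.mp hh]
  obtain ⟨N, hN⟩ := id_sum M hj (Ψ h) hPsih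
  refine ⟨N, fun n hn => ?_⟩
  rw [hN n hn]
  exact Finset.sum_congr rfl fun i _ => wordMap_redIter_psi M hcm hemp i j h

end Aux
end QShPaper

open QShPaper in
/-- For a unital algebra `A`, the operation `f ⊙ g := f ∘ QSh(g) ∘ ι`
makes `U(QSh(A), A)` an associative monoid (the universal semigroup of `A`) with two-sided
unit `j`; under `f ↦ Φ_f := QSh(f) ∘ ι` it corresponds to composition of coalgebra
endomorphisms of `QSh(A)`. Below, `M.IotaComp M.emp M.comul M.counit g Φ` expresses that
`Φ = QSh(g) ∘ ι`, so that `f ⊙ g = f ∘ₗ Φ`. -/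
theorem stmt16_universal_semigroup
    (k : Type*) [Field k] [CharZero k]
    (A : Type*) [Ring A] [Algebra k A]
    (Q : Type*) [AddCommGroup Q] [Module k Q]
    (M : QShModel k A Q) (j : Q →ₗ[k] A) (hj : M.IsJ j) :
    -- `Φ_g = QSh(g) ∘ ι` is a coalgebra endomorphism of `QSh(A)`, and `j ∘ Φ_g = g`
    -- (in particular `j ⊙ g = g`, i.e. `j` is a left unit for `⊙`)
    (∀ (g : Q →ₗ[k] A) (Φ : Q →ₗ[k] Q), g M.emp = 1 →
      M.IotaComp M.emp M.comul M.counit g Φ →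
        (M.counit ∘ₗ Φ = M.counit ∧
          M.comul ∘ₗ Φ = TensorProduct.map Φ Φ ∘ₗ M.comul ∧
          j ∘ₗ Φ = g)) ∧
    -- every coalgebra endomorphism `Ψ` of `QSh(A)` arises this way: `Ψ = Φ_{j ∘ Ψ}`
    -- (so `f ↦ Φ_f` is a bijection onto coalgebra endomorphisms)
    (∀ Ψ : Q →ₗ[k] Q,
      M.counit ∘ₗ Ψ = M.counit →
      M.comul ∘ₗ Ψ = TensorProduct.map Ψ Ψ ∘ₗ M.comul →
      M.IotaComp M.emp M.comul M.counit (j ∘ₗ Ψ) Ψ) ∧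
    -- `Φ_j = Id`, hence `f ⊙ j = f ∘ₗ Φ_j = f`: `j` is a right unit for `⊙`
    (∀ Φ : Q →ₗ[k] Q,
      M.IotaComp M.emp M.comul M.counit j Φ → Φ = LinearMap.id) ∧
    -- `Φ_{g ⊙ h} = Φ_g ∘ Φ_h`: `⊙` corresponds to composition of coalgebra endomorphisms,
    -- hence is associative
    (∀ (g h : Q →ₗ[k] A) (Φg Φh : Q →ₗ[k] Q), g M.emp = 1 → h M.emp = 1 →
      M.IotaComp M.emp M.comul M.counit g Φg →
      M.IotaComp M.emp M.comul M.counit h Φh →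
      M.IotaComp M.emp M.comul M.counit (g ∘ₗ Φh) (Φg ∘ₗ Φh)) := by
  refine ⟨?_, ?_, ?_, ?_⟩
  · intro g Φ hg hΦ
    exact ⟨QShPaper.Aux.counit_comp M hΦ, QShPaper.Aux.comul_comp M hΦ,
      QShPaper.Aux.j_comp M hj hg hΦ⟩
  · intro Ψ hcu hcm
    exact QShPaper.Aux.part2 M hj hcu hcm
  · intro Φ hΦ
    have hid : M.IotaComp M.emp M.comul M.counit j LinearMap.id := by
      refine ⟨rfl, fun h hh => ?_⟩
      obtain ⟨N, hN⟩ := QShPaper.Aux.id_sum M hj h hh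
      exact ⟨N, fun n hn => hN n hn⟩
    exact QShPaper.Aux.iota_unique M hΦ hid
  · intro g h Φg Φh hg hh hΦg hΦh
    have hcu : M.counit ∘ₗ (Φg ∘ₗ Φh) = M.counit := by
      rw [← LinearMap.comp_assoc, QShPaper.Aux.counit_comp M hΦg,
        QShPaper.Aux.counit_comp M hΦh]
    have hcm : M.comul ∘ₗ (Φg ∘ₗ Φh)
        = TensorProduct.map (Φg ∘ₗ Φh) (Φg ∘ₗ Φh) ∘ₗ M.comul := by
      rw [← LinearMap.comp_assoc, QShPaper.Aux.comul_comp M hΦg,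
        LinearMap.comp_assoc, QShPaper.Aux.comul_comp M hΦh,
        ← LinearMap.comp_assoc, ← TensorProduct.map_comp]
    have hfin := QShPaper.Aux.part2 M hj hcu hcm
    rwa [← LinearMap.comp_assoc, QShPaper.Aux.j_comp M hj hg hΦg] at hfin
end
end
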